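/- arXiv:2401.02947 — 4 statements merged into one kernel-verified Lean document; each statement's English description precedes it below -/
import Mathlib

section
/- Let H be a length heart in a triangulated category D with finitely many isomorphism classes of simple objects, let U be its set of simples and S ⊆ U. If there exists a stability condition σ = (Z, P) with P(0,1] = H, P(1) = ⟨S⟩ and P(0, φ] = S^⊥ ∩ H for some 0 < φ < 1, then the right simple tilt K = (S^⊥ ∩ H) * ⟨S⟩[-1] equals P[0, φ] and is a length heart. -/
open CategoryTheory Category Limits Pretriangulated

universe v u

namespace SMPaper

variable {C : Type u} [Category.{v} C] [Preadditive C] [HasZeroObject C] [HasShift C ℤ]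
  [∀ n : ℤ, (shiftFunctor C n).Additive] [Pretriangulated C]

/-- The image of a set of objects under the `n`-th shift, closed under isomorphism. -/
def shiftSet (S : Set C) (n : ℤ) : Set C :=
  {d | ∃ s ∈ S, Nonempty ((shiftFunctor C n).obj s ≅ d)}

/-- The extension product `A * B`: objects `d` fitting in a triangle `a → d → b → a[1]`. -/
def star (A B : Set C) : Set C :=
  {d | ∃ (a b : C) (f : a ⟶ d) (g : d ⟶ b) (h : b ⟶ (shiftFunctor C (1 : ℤ)).obj a),
    a ∈ A ∧ b ∈ B ∧ Triangle.mk f g h ∈ (distTriang C)}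

/-- `Hom(A, B) = 0`. -/
def homOrth (A B : Set C) : Prop :=
  ∀ ⦃a : C⦄, a ∈ A → ∀ ⦃b : C⦄, b ∈ B → ∀ f : a ⟶ b, f = 0

/-- Right perpendicular `S^⊥`. -/
def rPerp (S : Set C) : Set C := {d | ∀ s ∈ S, ∀ f : s ⟶ d, f = 0}

/-- Left perpendicular `^⊥S`. -/
def lPerp (S : Set C) : Set C := {d | ∀ s ∈ S, ∀ f : d ⟶ s, f = 0}

def isoClosure (S : Set C) : Set C := {d | ∃ s ∈ S, Nonempty (s ≅ d)}

/-- The extension closure of a set of objects. -/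
inductive ExtClosureP (S : Set C) : C → Prop
  | of (s : C) : s ∈ S → ExtClosureP S s
  | zero (z : C) : IsZero z → ExtClosureP S z
  | iso (x y : C) : (x ≅ y) → ExtClosureP S x → ExtClosureP S y
  | ext (a d b : C) (f : a ⟶ d) (g : d ⟶ b) (h : b ⟶ (shiftFunctor C (1 : ℤ)).obj a) :
      Triangle.mk f g h ∈ (distTriang C) → ExtClosureP S a → ExtClosureP S b → ExtClosureP S d

def extClosure (S : Set C) : Set C := {d | ExtClosureP S d}

/-- `⟨S⟩[i] * ⟨S⟩[i-1] * ⋯ * ⟨S⟩[i-n]`. -/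
def prodDown (S : Set C) : ℤ → ℕ → Set C
  | i, 0 => shiftSet (extClosure S) i
  | i, n + 1 => star (shiftSet (extClosure S) i) (prodDown S (i - 1) n)

/-- `susp S = ⋃_{n ≥ 0} ⟨S⟩[n] * ⋯ * ⟨S⟩[0]`. -/
def suspSet (S : Set C) : Set C := {d | ∃ n : ℕ, d ∈ prodDown S n n}

/-- `cosusp S = ⋃_{n ≥ 0} ⟨S⟩[0] * ⋯ * ⟨S⟩[-n]`. -/
def cosuspSet (S : Set C) : Set C := {d | ∃ n : ℕ, d ∈ prodDown S 0 n}

/-- `cosusp (S[-1]) = ⋃_{n ≥ 0} ⟨S⟩[-1] * ⋯ * ⟨S⟩[-1-n]`. -/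
def cosuspNeg (S : Set C) : Set C := {d | ∃ n : ℕ, d ∈ prodDown S (-1) n}

/-- A t-structure `(X, Y)`: full (iso-closed, containing zero) subcategories with
`Hom(X, Y) = 0`, `D = X * Y` and `X[1] ⊆ X`. -/
structure IsTStructure (X Y : Set C) : Prop where
  isoX : ∀ ⦃x y : C⦄, (x ≅ y) → x ∈ X → y ∈ X
  isoY : ∀ ⦃x y : C⦄, (x ≅ y) → x ∈ Y → y ∈ Y
  zeroX : ∀ z : C, IsZero z → z ∈ X
  zeroY : ∀ z : C, IsZero z → z ∈ Y
  hom : homOrth X Y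
  gen : ∀ d : C, d ∈ star X Y
  shift : shiftSet X 1 ⊆ X

/-- A co-t-structure `(W, X)`. -/
structure IsCoTStructure (W X : Set C) : Prop where
  isoW : ∀ ⦃x y : C⦄, (x ≅ y) → x ∈ W → y ∈ W
  isoX : ∀ ⦃x y : C⦄, (x ≅ y) → x ∈ X → y ∈ X
  zeroW : ∀ z : C, IsZero z → z ∈ W
  zeroX : ∀ z : C, IsZero z → z ∈ X
  hom : homOrth W X
  gen : ∀ d : C, d ∈ star W X
  shift : shiftSet W (-1) ⊆ W

/-- The heart `X ∩ Y[1]` of a t-structure. -/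
def heart (X Y : Set C) : Set C := X ∩ shiftSet Y 1

/-- Boundedness of a torsion pair/t-structure. -/
def IsBoundedTS (X Y : Set C) : Prop :=
  ∀ d : C, (∃ n : ℤ, d ∈ shiftSet X n) ∧ (∃ n : ℤ, d ∈ shiftSet Y n)

/-- A torsion pair `(T, F)` in the heart `H`: `Hom(T, F) = 0` and every object of `H`
is an extension of an object of `F` by an object of `T`. -/
structure IsTorsionPairIn (H T F : Set C) : Prop where
  isoT : ∀ ⦃x y : C⦄, (x ≅ y) → x ∈ T → y ∈ T
  isoF : ∀ ⦃x y : C⦄, (x ≅ y) → x ∈ F → y ∈ F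
  subT : T ⊆ H
  subF : F ⊆ H
  hom : homOrth T F
  gen : H ⊆ star T F

/-- `f : x → d` is a right `S`-approximation. -/
def IsRightApprox (S : Set C) {x d : C} (f : x ⟶ d) : Prop :=
  x ∈ S ∧ ∀ ⦃x' : C⦄, x' ∈ S → ∀ g : x' ⟶ d, ∃ h : x' ⟶ x, h ≫ f = g

/-- `f : d → x` is a left `S`-approximation. -/
def IsLeftApprox (S : Set C) {d x : C} (f : d ⟶ x) : Prop :=
  x ∈ S ∧ ∀ ⦃x' : C⦄, x' ∈ S → ∀ g : d ⟶ x', ∃ h : x ⟶ x', f ≫ h = g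

def RightMinimal {x d : C} (f : x ⟶ d) : Prop :=
  ∀ β : x ⟶ x, β ≫ f = f → IsIso β

def LeftMinimal {d x : C} (f : d ⟶ x) : Prop :=
  ∀ β : x ⟶ x, f ≫ β = f → IsIso β

def HasRightApprox (S : Set C) (d : C) : Prop := ∃ (x : C) (f : x ⟶ d), IsRightApprox S f

def HasLeftApprox (S : Set C) (d : C) : Prop := ∃ (x : C) (f : d ⟶ x), IsLeftApprox S f

def ContravariantlyFiniteIn (S A : Set C) : Prop := ∀ d ∈ A, HasRightApprox S d

def CovariantlyFiniteIn (S A : Set C) : Prop := ∀ d ∈ A, HasLeftApprox S d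

/-- An orthogonal collection (semibrick). -/
structure IsOrthogonal (U : Set C) : Prop where
  nonzero : ∀ u ∈ U, ¬ IsZero u
  hom : ∀ ⦃u v : C⦄, u ∈ U → v ∈ U → ¬ Nonempty (u ≅ v) → ∀ f : u ⟶ v, f = 0
  div : ∀ u ∈ U, ∀ f : u ⟶ u, f = 0 ∨ IsIso f

/-- An `∞`-orthogonal collection. -/
def IsInfOrthogonal (U : Set C) : Prop :=
  IsOrthogonal U ∧ ∀ ⦃u v : C⦄, u ∈ U → v ∈ U → ∀ m : ℤ, 0 < m →
    ∀ f : (shiftFunctor C m).obj u ⟶ v, f = 0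

/-- A simple-minded collection. -/
def IsSMC (U : Set C) : Prop :=
  IsInfOrthogonal U ∧ ∀ d : C, ∃ i j : ℤ, j ≤ i ∧ d ∈ prodDown U i (i - j).toNat

/-- `m` is a right mutation `∂_S(d)` of `d` with respect to `S`. -/
def IsRightMutation (S : Set C) (d m : C) : Prop :=
  (d ∈ S ∧ Nonempty (d ≅ m)) ∨
  (d ∉ S ∧ ∃ (s : C) (f : s ⟶ (shiftFunctor C (1 : ℤ)).obj d)
      (g : (shiftFunctor C (1 : ℤ)).obj d ⟶ m) (h : m ⟶ (shiftFunctor C (1 : ℤ)).obj s),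
    IsRightApprox (extClosure S) f ∧ RightMinimal f ∧ Triangle.mk f g h ∈ (distTriang C))

/-- `m` is a left mutation `∂⁻_S(d)` of `d` with respect to `S`. -/
def IsLeftMutation (S : Set C) (d m : C) : Prop :=
  (d ∈ S ∧ Nonempty (d ≅ m)) ∨
  (d ∉ S ∧ ∃ (s : C) (g : m ⟶ (shiftFunctor C (-1 : ℤ)).obj d)
      (f : (shiftFunctor C (-1 : ℤ)).obj d ⟶ s) (h : s ⟶ (shiftFunctor C (1 : ℤ)).obj m),
    IsLeftApprox (extClosure S) f ∧ LeftMinimal f ∧ Triangle.mk g f h ∈ (distTriang C))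

def rightMutationSet (S U : Set C) : Set C := {m | ∃ u ∈ U, IsRightMutation S u m}

def leftMutationSet (S U : Set C) : Set C := {m | ∃ u ∈ U, IsLeftMutation S u m}

/-- `h` is a simple object of the heart `H`. -/
def IsSimpleIn (H : Set C) (h : C) : Prop :=
  h ∈ H ∧ ¬ IsZero h ∧
    ∀ (a b : C) (f : a ⟶ h) (g : h ⟶ b) (w : b ⟶ (shiftFunctor C (1 : ℤ)).obj a),
      a ∈ H → b ∈ H → Triangle.mk f g w ∈ (distTriang C) → IsZero a ∨ IsZero b

def simplesOf (H : Set C) : Set C := {h | IsSimpleIn H h}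

/-- A heart is a length category iff every object has a finite composition series, i.e.
lies in the extension closure of the simple objects. -/
def HeartIsLength (H : Set C) : Prop := H ⊆ extClosure (simplesOf H)

/-- A bounded t-structure with length heart. -/
def IsLengthHeart (X Y : Set C) : Prop :=
  IsTStructure X Y ∧ IsBoundedTS X Y ∧ HeartIsLength (heart X Y)

/-- An `S`-mutation pair `(A, B)`. -/
def IsSMutationPair (S A B : Set C) : Prop :=
  isoClosure A =
    lPerp S ∩ rPerp S ∩ lPerp (shiftSet S (-1)) ∩ shiftSet (star (extClosure S) B) (-1) ∧
  isoClosure B =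
    lPerp S ∩ rPerp S ∩ rPerp (shiftSet S 1) ∩ shiftSet (star A (extClosure S)) 1

/-- The conditions of the SMC Setup. -/
def SMCSetup (S : Set C) : Prop :=
  CovariantlyFiniteIn (extClosure S)
    {d | ∀ s ∈ S, ∀ m : ℤ, m < 0 → ∀ f : d ⟶ (shiftFunctor C m).obj s, f = 0} ∧
  ContravariantlyFiniteIn (extClosure S)
    {d | ∀ s ∈ S, ∀ m : ℤ, 0 < m → ∀ f : (shiftFunctor C m).obj s ⟶ d, f = 0} ∧
  (∀ d : C, ∃ N : ℤ, ∀ m : ℤ, m ≤ N → ∀ s ∈ S, ∀ f : d ⟶ (shiftFunctor C m).obj s, f = 0) ∧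
  (∀ d : C, ∃ N : ℤ, ∀ m : ℤ, N ≤ m → ∀ s ∈ S, ∀ f : (shiftFunctor C m).obj s ⟶ d, f = 0)

/-- `f : p → h` is an epimorphism in the heart `H`, i.e. fits in a triangle
`a → p → h → a[1]` with `a ∈ H`. -/
def IsEpiIn (H : Set C) {p h : C} (f : p ⟶ h) : Prop :=
  ∃ (a : C) (i : a ⟶ p) (w : h ⟶ (shiftFunctor C (1 : ℤ)).obj a),
    a ∈ H ∧ Triangle.mk i f w ∈ (distTriang C)

/-- `f : h → i` is a monomorphism in the heart `H`. -/
def IsMonoIn (H : Set C) {h i : C} (f : h ⟶ i) : Prop :=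
  ∃ (b : C) (q : i ⟶ b) (w : b ⟶ (shiftFunctor C (1 : ℤ)).obj h),
    b ∈ H ∧ Triangle.mk f q w ∈ (distTriang C)

def IsProjectiveIn (H : Set C) (p : C) : Prop :=
  p ∈ H ∧ ∀ ⦃x y : C⦄ (f : x ⟶ y), x ∈ H → y ∈ H → IsEpiIn H f →
    ∀ g : p ⟶ y, ∃ l : p ⟶ x, l ≫ f = g

def IsInjectiveIn (H : Set C) (i : C) : Prop :=
  i ∈ H ∧ ∀ ⦃x y : C⦄ (f : x ⟶ y), x ∈ H → y ∈ H → IsMonoIn H f →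
    ∀ g : x ⟶ i, ∃ l : y ⟶ i, f ≫ l = g

def EnoughProjectivesIn (H : Set C) : Prop :=
  ∀ h ∈ H, ∃ (p : C) (f : p ⟶ h), IsProjectiveIn H p ∧ IsEpiIn H f

def EnoughInjectivesIn (H : Set C) : Prop :=
  ∀ h ∈ H, ∃ (i : C) (f : h ⟶ i), IsInjectiveIn H i ∧ IsMonoIn H f


/-- Iterated extension product of a finite family of subcategories. -/
def starFin : ∀ n : ℕ, (Fin n → Set C) → Set C
  | 0, _ => {d | IsZero d}
  | n + 1, F => star (F 0) (starFin n fun i => F i.succ)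

/-- A Bridgeland stability condition, given by a stability function `Z` and a locally
finite slicing `P` satisfying the Harder–Narasimhan property and (a consequence of) the
support property: slices over intervals of length `< 1` are length categories. -/
structure StabilityCondition (C : Type u) [Category.{v} C] [Preadditive C]
    [HasZeroObject C] [HasShift C ℤ] [∀ n : ℤ, (shiftFunctor C n).Additive]
    [Pretriangulated C] where
  Z : C → ℂ
  P : ℝ → Set C
  isoP : ∀ φ : ℝ, ∀ ⦃x y : C⦄, (x ≅ y) → x ∈ P φ → y ∈ P φ
  shiftP : ∀ φ : ℝ, P (φ + 1) = shiftSet (P φ) 1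
  homP : ∀ φ ψ : ℝ, ψ < φ → homOrth (P φ) (P ψ)
  hn : ∀ d : C, ∃ (n : ℕ) (φs : Fin n → ℝ), StrictAnti φs ∧
    d ∈ starFin n (fun i => P (φs i))
  additiveZ : ∀ T : Triangle C, T ∈ (distTriang C) → Z T.obj₂ = Z T.obj₁ + Z T.obj₃
  phaseZ : ∀ (φ : ℝ) (d : C), d ∈ P φ → ¬ IsZero d →
    ∃ r : ℝ, 0 < r ∧ Z d = (r : ℂ) * Complex.exp (((Real.pi * φ : ℝ) : ℂ) * Complex.I)
  support : ∀ a b : ℝ, b - a < 1 →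
    HeartIsLength (extClosure (⋃ φ ∈ Set.Icc a b, P φ))

set_option linter.unusedSectionVars false
section NoRQ
attribute [-instance] CategoryTheory.catToReflQuiver
/-! ### Auxiliary lemmas -/

section Aux

lemma isZero_shift' {z : C} (hz : IsZero z) (n : ℤ) : IsZero (z⟦n⟧) := by
  rw [IsZero.iff_id_eq_zero] at hz ⊢
  rw [show 𝟙 (z⟦n⟧) = (shiftFunctor C n).map (𝟙 z) from ((shiftFunctor C n).map_id z).symm, hz,
    Functor.map_zero]

lemma extClosure_mono {S T : Set C} (h : S ⊆ T) : extClosure S ⊆ extClosure T := by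
  intro d hd
  induction hd with
  | of s hs => exact ExtClosureP.of s (h hs)
  | zero z hz => exact ExtClosureP.zero z hz
  | iso x y e _ ih => exact ExtClosureP.iso x y e ih
  | ext a d b f g w hT _ _ iha ihb => exact ExtClosureP.ext a d b f g w hT iha ihb

lemma extClosure_ext' {S : Set C} {T : Triangle C} (hT : T ∈ distTriang C)
    (h1 : T.obj₁ ∈ extClosure S) (h3 : T.obj₃ ∈ extClosure S) : T.obj₂ ∈ extClosure S :=
  ExtClosureP.ext T.obj₁ T.obj₂ T.obj₃ T.mor₁ T.mor₂ T.mor₃ hT h1 h3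

lemma hom_from_extClosure {S : Set C} {x : C}
    (h : ∀ s ∈ S, ∀ f : s ⟶ x, f = 0) :
    ∀ d ∈ extClosure S, ∀ f : d ⟶ x, f = 0 := by
  intro d hd
  induction hd with
  | of s hs => exact h s hs
  | zero z hz => intro f; exact hz.eq_of_src f 0
  | iso a b e _ ih =>
    intro f
    rw [← cancel_epi e.hom, comp_zero]
    exact ih (e.hom ≫ f)
  | ext a d b f g w hT _ _ iha ihb =>
    intro μ
    obtain ⟨ν, hν⟩ := Triangle.yoneda_exact₂ _ hT μ (iha (f ≫ μ))
    rw [hν, ihb ν]; exact comp_zero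

lemma hom_to_extClosure {S : Set C} {x : C}
    (h : ∀ s ∈ S, ∀ f : x ⟶ s, f = 0) :
    ∀ d ∈ extClosure S, ∀ f : x ⟶ d, f = 0 := by
  intro d hd
  induction hd with
  | of s hs => exact h s hs
  | zero z hz => intro f; exact hz.eq_of_tgt f 0
  | iso a b e _ ih =>
    intro f
    rw [← cancel_mono e.inv, zero_comp]
    exact ih (f ≫ e.inv)
  | ext a d b f g w hT _ _ iha ihb =>
    intro μ
    obtain ⟨ν, hν⟩ := Triangle.coyoneda_exact₂ _ hT μ (ihb (μ ≫ g))
    rw [hν, iha ν]; exact zero_comp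

lemma starFin_subset_extClosure :
    ∀ (n : ℕ) (F : Fin n → Set C), starFin n F ⊆ extClosure (⋃ i, F i)
  | 0, _ => fun d hd => ExtClosureP.zero d hd
  | n+1, F => fun d hd => by
    obtain ⟨a, b, f, g, w, ha, hb, hT⟩ := hd
    refine ExtClosureP.ext a d b f g w hT (ExtClosureP.of a (Set.mem_iUnion.2 ⟨0, ha⟩))
      (extClosure_mono ?_ (starFin_subset_extClosure n _ hb))
    intro x hx
    obtain ⟨i, hi⟩ := Set.mem_iUnion.1 hx
    exact Set.mem_iUnion.2 ⟨i.succ, hi⟩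

lemma star_iso_closed {A B : Set C} {x y : C} (e : x ≅ y) (hx : x ∈ star A B) :
    y ∈ star A B := by
  obtain ⟨a, b, f, g, w, ha, hb, hT⟩ := hx
  refine ⟨a, b, f ≫ e.hom, e.inv ≫ g, w, ha, hb, ?_⟩
  refine isomorphic_distinguished _ hT _ ?_
  exact Triangle.isoMk _ _ (Iso.refl a) e.symm (Iso.refl b) (by simp [Triangle.mk]) (by simp [Triangle.mk]) (by simp [Triangle.mk])

lemma strip_top {a d b : C} {f : a ⟶ d} {g : d ⟶ b} {w : b ⟶ a⟦(1:ℤ)⟧}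
    (hT : Triangle.mk f g w ∈ distTriang C) (hf : f = 0)
    (hab : ∀ s : a⟦(1:ℤ)⟧ ⟶ b, s = 0) : IsIso g := by
  obtain ⟨s, hs⟩ := Triangle.coyoneda_exact₁ _ hT (𝟙 (a⟦(1:ℤ)⟧)) (by rw [hf]; simp [Triangle.mk]; rfl)
  have hz1 : IsZero (a⟦(1:ℤ)⟧) := by
    rw [IsZero.iff_id_eq_zero, hs, hab s]; exact zero_comp
  have hza : IsZero a :=
    (isZero_shift' hz1 (-1)).of_iso ((shiftEquiv C (1:ℤ)).unitIso.app a)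
  exact (Triangle.isZero₁_iff_isIso₂ _ hT).1 hza

lemma hom_shift_kill {x p : C} (h : ∀ f : x ⟶ p⟦(-1:ℤ)⟧, f = 0)
    (g : x⟦(1:ℤ)⟧ ⟶ p) : g = 0 := by
  have h1 : (shiftEquiv C (1:ℤ)).unitIso.hom.app x ≫ g⟦(-1:ℤ)⟧' = 0 := h _
  have h2 : g⟦(-1:ℤ)⟧' = 0 := by
    exact (cancel_epi ((shiftEquiv C (1:ℤ)).unitIso.hom.app x)).1 (h1.trans comp_zero.symm)
  rwa [Functor.map_eq_zero_iff] at h2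

end Aux

section Sigma

variable (σ : StabilityCondition C)

lemma P_shift_up {ψ : ℝ} {x : C} (hx : x ∈ σ.P ψ) : x⟦(1:ℤ)⟧ ∈ σ.P (ψ + 1) := by
  rw [σ.shiftP]
  exact ⟨x, hx, ⟨Iso.refl _⟩⟩

lemma P_shift_down {ψ : ℝ} {x : C} (hx : x ∈ σ.P ψ) : x⟦(-1:ℤ)⟧ ∈ σ.P (ψ - 1) := by
  have h := σ.shiftP (ψ - 1)
  rw [sub_add_cancel] at h
  rw [h] at hx
  obtain ⟨s, hs, ⟨e⟩⟩ := hx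
  exact σ.isoP _ ((shiftEquiv C (1:ℤ)).unitIso.app s ≪≫ (shiftFunctor C (-1:ℤ)).mapIso e) hs

lemma hom_into_Icc_zero {φ τ : ℝ} (hτ : φ < τ) {p d : C} (hp : p ∈ σ.P τ)
    (hd : d ∈ extClosure (⋃ ψ ∈ Set.Icc (0:ℝ) φ, σ.P ψ)) (f : p ⟶ d) : f = 0 := by
  refine hom_to_extClosure ?_ d hd f
  intro s hs f'
  simp only [Set.mem_iUnion] at hs
  obtain ⟨ψ, hψ, hsψ⟩ := hs
  exact σ.homP τ ψ (lt_of_le_of_lt hψ.2 hτ) hp hsψ f'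

lemma hom_from_Icc_zero {φ τ : ℝ} (hτ : τ < 0) {p d : C} (hp : p ∈ σ.P τ)
    (hd : d ∈ extClosure (⋃ ψ ∈ Set.Icc (0:ℝ) φ, σ.P ψ)) (f : d ⟶ p) : f = 0 := by
  refine hom_from_extClosure ?_ d hd f
  intro s hs f'
  simp only [Set.mem_iUnion] at hs
  obtain ⟨ψ, hψ, hsψ⟩ := hs
  exact σ.homP ψ τ (lt_of_lt_of_le hτ hψ.1) hsψ hp f'

lemma hom_into_Ioc_zero {φ τ : ℝ} (hτ : φ < τ) {p d : C} (hp : p ∈ σ.P τ)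
    (hd : d ∈ extClosure (⋃ ψ ∈ Set.Ioc (0:ℝ) φ, σ.P ψ)) (f : p ⟶ d) : f = 0 := by
  refine hom_to_extClosure ?_ d hd f
  intro s hs f'
  simp only [Set.mem_iUnion] at hs
  obtain ⟨ψ, hψ, hsψ⟩ := hs
  exact σ.homP τ ψ (lt_of_le_of_lt hψ.2 hτ) hp hsψ f'

lemma hom_from_Ioc_zero {φ τ : ℝ} (hτ : τ ≤ 0) {p d : C} (hp : p ∈ σ.P τ)
    (hd : d ∈ extClosure (⋃ ψ ∈ Set.Ioc (0:ℝ) φ, σ.P ψ)) (f : d ⟶ p) : f = 0 := by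
  refine hom_from_extClosure ?_ d hd f
  intro s hs f'
  simp only [Set.mem_iUnion] at hs
  obtain ⟨ψ, hψ, hsψ⟩ := hs
  exact σ.homP ψ τ (lt_of_le_of_lt hτ hψ.1) hsψ hp f'

lemma hom_into_starFin_zero {n : ℕ} {φs : Fin n → ℝ} {b : C}
    (hb : b ∈ starFin n (fun i => σ.P (φs i))) {τ : ℝ} (hτ : ∀ i, φs i < τ)
    {p : C} (hp : p ∈ σ.P τ) (f : p ⟶ b) : f = 0 := by
  refine hom_to_extClosure ?_ b (starFin_subset_extClosure n _ hb) f
  intro s hs f'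
  obtain ⟨i, hi⟩ := Set.mem_iUnion.1 hs
  exact σ.homP τ (φs i) (hτ i) hp hi f'

lemma negz : ∀ (n : ℕ) (φs : Fin n → ℝ), StrictAnti φs → ∀ d : C,
    d ∈ starFin n (fun i => σ.P (φs i)) →
    (∀ i : Fin n, ∀ p ∈ σ.P (φs i), ∀ f : d ⟶ p, f = 0) → IsZero d := by
  intro n
  induction n with
  | zero => intro φs _ d hd _; exact hd
  | succ n ih =>
    intro φs hanti d hd hkill
    obtain ⟨a, b, f, g, w, ha, hb, hT⟩ := hd
    have hkb : ∀ i : Fin n, ∀ p ∈ σ.P ((fun i : Fin n => φs i.succ) i), ∀ μ : b ⟶ p, μ = 0 := by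
      intro i p hp μ
      obtain ⟨ν, hν⟩ := Triangle.yoneda_exact₂ _ (rot_of_distTriang _ hT) μ
        (hkill i.succ p hp (g ≫ μ))
      have hν0 : ν = 0 := by
        have h1 : φs i.succ < φs 0 + 1 := by
          have := hanti (Fin.succ_pos i); linarith
        exact σ.homP _ _ h1 (P_shift_up σ ha) hp ν
      rw [hν, hν0, comp_zero]; rfl
    have hbz : IsZero b := ih _ (fun i j hij => hanti (by simpa using hij)) b hb hkb
    have hfi : IsIso f := (Triangle.isZero₃_iff_isIso₁ _ hT).1 hbz
    have hda : d ∈ σ.P (φs 0) := σ.isoP _ (asIso f) ha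
    rw [IsZero.iff_id_eq_zero]
    exact hkill 0 d hda (𝟙 d)

lemma char (φ : ℝ) : ∀ (n : ℕ) (φs : Fin n → ℝ), StrictAnti φs → ∀ d : C,
    d ∈ starFin n (fun i => σ.P (φs i)) →
    (∀ τ, φ < τ → ∀ p ∈ σ.P τ, ∀ f : p ⟶ d, f = 0) →
    (∀ τ, τ < 0 → ∀ p ∈ σ.P τ, ∀ f : d ⟶ p, f = 0) →
    d ∈ extClosure (⋃ ψ ∈ Set.Icc (0:ℝ) φ, σ.P ψ) := by
  intro n
  induction n with
  | zero => intro _ _ d hd _ _; exact ExtClosureP.zero d hd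
  | succ n ih =>
    intro φs hanti d hd htop hbot
    obtain ⟨a, b, f, g, w, ha, hb, hT⟩ := hd
    have htail : StrictAnti (fun i : Fin n => φs i.succ) :=
      fun i j hij => hanti (by simpa using hij)
    have htaillt : ∀ i : Fin n, φs i.succ < φs 0 := fun i => hanti (Fin.succ_pos i)
    by_cases h1 : φ < φs 0
    · have hgi : IsIso g := strip_top hT (htop _ h1 a ha f)
        (fun s => hom_into_starFin_zero σ hb (fun i => by linarith [htaillt i])
          (P_shift_up σ ha) s)
      have e : d ≅ b := asIso g
      refine ExtClosureP.iso b d e.symm (ih _ htail b hb ?_ ?_)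
      · intro τ hτ p hp μ
        rw [← cancel_mono e.inv, zero_comp]
        exact htop τ hτ p hp (μ ≫ e.inv)
      · intro τ hτ p hp μ
        rw [← cancel_epi e.hom, comp_zero]
        exact hbot τ hτ p hp (e.hom ≫ μ)
    · push_neg at h1
      by_cases h2 : φs 0 < 0
      · refine ExtClosureP.zero d (negz σ _ φs hanti d ⟨a, b, f, g, w, ha, hb, hT⟩ ?_)
        intro i p hp μ
        exact hbot _ (lt_of_le_of_lt (hanti.antitone (Fin.zero_le i)) h2) p hp μ
      · push_neg at h2
        have hbotb : ∀ τ, τ < 0 → ∀ p ∈ σ.P τ, ∀ μ : b ⟶ p, μ = 0 := by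
          intro τ hτ p hp μ
          obtain ⟨ν, hν⟩ := Triangle.yoneda_exact₂ _ (rot_of_distTriang _ hT) μ
            (hbot τ hτ p hp (g ≫ μ))
          rw [hν, σ.homP _ _ (by linarith) (P_shift_up σ ha) hp ν]; exact comp_zero
        have htopb : ∀ τ, φ < τ → ∀ p ∈ σ.P τ, ∀ μ : p ⟶ b, μ = 0 := by
          intro τ hτ p hp μ
          exact hom_into_starFin_zero σ hb (fun i => by linarith [htaillt i]) hp μ
        exact ExtClosureP.ext a d b f g w hT
          (ExtClosureP.of a (Set.mem_biUnion ⟨h2, h1⟩ ha))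
          (ih _ htail b hb htopb hbotb)

end Sigma

section ZLemmas

open ZeroObject

variable (σ : StabilityCondition C)

lemma Z_zero_object : σ.Z (0 : C) = 0 := by
  have h := σ.additiveZ _ (contractible_distinguished (0 : C))
  change σ.Z (0 : C) = σ.Z (0 : C) + σ.Z (0 : C) at h
  linear_combination -h

lemma Z_iso {x y : C} (e : x ≅ y) : σ.Z x = σ.Z y := by
  have hdist : Triangle.mk e.hom (0 : y ⟶ (0:C)) (0 : (0:C) ⟶ x⟦(1:ℤ)⟧) ∈ distTriang C := by
    refine isomorphic_distinguished _ (contractible_distinguished x) _ ?_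
    exact Triangle.isoMk _ _ (Iso.refl x) e.symm (Iso.refl 0) (by exact e.hom_inv_id.trans (id_comp _).symm)
      (by exact (zero_comp (X := y)).trans (comp_zero (f := e.inv)).symm) (by exact (zero_comp (X := (0:C))).trans (comp_zero (f := 𝟙 (0:C))).symm)
  have h := σ.additiveZ _ hdist
  change σ.Z y = σ.Z x + σ.Z (0 : C) at h
  rw [Z_zero_object σ] at h
  linear_combination -h

lemma Z_isZero {z : C} (hz : IsZero z) : σ.Z z = 0 := by
  rw [Z_iso σ (hz.iso (isZero_zero C)), Z_zero_object σ]

lemma Z_shift (x : C) : σ.Z (x⟦(1:ℤ)⟧) = - σ.Z x := by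
  have h := σ.additiveZ _ (rot_of_distTriang _ (contractible_distinguished x))
  change σ.Z (0 : C) = σ.Z x + σ.Z (x⟦(1:ℤ)⟧) at h
  rw [Z_zero_object σ] at h
  linear_combination -h

lemma Z_window {φ : ℝ} (hφ1 : φ < 1) :
    ∀ d ∈ extClosure (⋃ ψ ∈ Set.Icc (0:ℝ) φ, σ.P ψ),
    0 ≤ (σ.Z d).im ∧ ((σ.Z d).im = 0 → 0 ≤ (σ.Z d).re) ∧ (σ.Z d = 0 → IsZero d) := by
  intro d hd
  induction hd with
  | of s hs =>
    simp only [Set.mem_iUnion] at hs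
    obtain ⟨ψ, hψ, hsψ⟩ := hs
    by_cases hz : IsZero s
    · rw [Z_isZero σ hz]
      exact ⟨le_refl _, fun _ => le_refl _, fun _ => hz⟩
    · obtain ⟨r, hr, hZ⟩ := σ.phaseZ ψ s hsψ hz
      have hπ := Real.pi_pos
      have him : (σ.Z s).im = r * Real.sin (Real.pi * ψ) := by
        rw [hZ, Complex.exp_mul_I]
        simp [← Complex.ofReal_mul, ← Complex.ofReal_cos, ← Complex.ofReal_sin]
      have hre : (σ.Z s).re = r * Real.cos (Real.pi * ψ) := by
        rw [hZ, Complex.exp_mul_I]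
        simp [← Complex.ofReal_mul, ← Complex.ofReal_cos, ← Complex.ofReal_sin]
      have hsin : 0 ≤ Real.sin (Real.pi * ψ) := by
        apply Real.sin_nonneg_of_nonneg_of_le_pi
        · nlinarith [hψ.1]
        · nlinarith [hψ.2]
      refine ⟨by rw [him]; positivity, ?_, ?_⟩
      · intro h0
        rw [him] at h0
        have hsin0 : Real.sin (Real.pi * ψ) = 0 := by
          rcases mul_eq_zero.1 h0 with h | h
          · exact absurd h hr.ne'
          · exact h
        have hψ0 : ψ = 0 := by
          rcases Real.sin_eq_zero_iff.mp hsin0 with ⟨m, hm⟩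
          rw [mul_comm] at hm
          have hmx : (m:ℝ) = ψ := mul_left_cancel₀ hπ.ne' (by linarith [hm])
          have h0' : (0:ℤ) ≤ m := by exact_mod_cast hmx ▸ hψ.1
          have h1' : m < 1 := by exact_mod_cast hmx ▸ lt_of_le_of_lt hψ.2 hφ1
          have : m = 0 := by omega
          rw [← hmx, this, Int.cast_zero]
        rw [hre, hψ0, mul_zero, Real.cos_zero, mul_one]
        exact hr.le
      · intro h0
        exfalso
        rw [hZ] at h0
        exact (mul_ne_zero (by exact_mod_cast hr.ne') (Complex.exp_ne_zero _)) h0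
  | zero z hz =>
    rw [Z_isZero σ hz]
    exact ⟨le_refl _, fun _ => le_refl _, fun _ => hz⟩
  | iso x y e hx ih =>
    rw [← Z_iso σ e]
    exact ⟨ih.1, ih.2.1, fun h => (ih.2.2 h).of_iso e.symm⟩
  | ext a d b f g w hT ha hb iha ihb =>
    have hZ : σ.Z d = σ.Z a + σ.Z b := σ.additiveZ _ hT
    have him : (σ.Z d).im = (σ.Z a).im + (σ.Z b).im := by rw [hZ, Complex.add_im]
    have hre : (σ.Z d).re = (σ.Z a).re + (σ.Z b).re := by rw [hZ, Complex.add_re]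
    refine ⟨by rw [him]; linarith [iha.1, ihb.1], ?_, ?_⟩
    · intro h0
      rw [him] at h0
      have ha0 : (σ.Z a).im = 0 := by linarith [iha.1, ihb.1]
      have hb0 : (σ.Z b).im = 0 := by linarith [iha.1, ihb.1]
      rw [hre]
      linarith [iha.2.1 ha0, ihb.2.1 hb0]
    · intro h0
      have him0 : (σ.Z d).im = 0 := by rw [h0]; simp
      have hre0 : (σ.Z d).re = 0 := by rw [h0]; simp
      rw [him] at him0
      have ha0 : (σ.Z a).im = 0 := by linarith [iha.1, ihb.1]
      have hb0 : (σ.Z b).im = 0 := by linarith [iha.1, ihb.1]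
      have hra := iha.2.1 ha0
      have hrb := ihb.2.1 hb0
      rw [hre] at hre0
      have hZa : σ.Z a = 0 := Complex.ext (by simpa using (show (σ.Z a).re = 0 by linarith)) (by simpa using ha0)
      have hZb : σ.Z b = 0 := Complex.ext (by simpa using (show (σ.Z b).re = 0 by linarith)) (by simpa using hb0)
      exact Triangle.isZero₂_of_isZero₁₃ _ hT (iha.2.2 hZa) (ihb.2.2 hZb)

end ZLemmas

section Main

open ZeroObject Preadditive

variable (σ : StabilityCondition C)

lemma main_decomp {φ : ℝ} (hφ0 : 0 < φ) (hφ1 : φ < 1)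
    (hzero : ∀ z : C, IsZero z → z ∈ σ.P 0) :
    ∀ (n : ℕ) (φs : Fin n → ℝ), StrictAnti φs → ∀ d : C,
    d ∈ starFin n (fun i => σ.P (φs i)) →
    (∀ τ, φ < τ → ∀ p ∈ σ.P τ, ∀ f : p ⟶ d, f = 0) →
    (∀ τ, τ < 0 → ∀ p ∈ σ.P τ, ∀ f : d ⟶ p, f = 0) →
    d ∈ star (extClosure (⋃ ψ ∈ Set.Ioc (0:ℝ) φ, σ.P ψ)) (σ.P 0) := by
  intro n
  induction n with
  | zero =>
    intro φs _ d hd _ _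
    exact ⟨0, d, 0, 𝟙 d, 0, ExtClosureP.zero _ (isZero_zero C), hzero d hd,
      contractible_distinguished₁ d⟩
  | succ n ih =>
    intro φs hanti d hd htop hbot
    obtain ⟨a, b, f, g, w, ha, hb, hT⟩ := hd
    have htail : StrictAnti (fun i : Fin n => φs i.succ) :=
      fun i j hij => hanti (by simpa using hij)
    have htaillt : ∀ i : Fin n, φs i.succ < φs 0 := fun i => hanti (Fin.succ_pos i)
    by_cases h1 : φ < φs 0
    · -- strip the top factor, which must vanish
      have hgi : IsIso g := strip_top hT (htop _ h1 a ha f)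
        (fun s => hom_into_starFin_zero σ hb (fun i => by linarith [htaillt i])
          (P_shift_up σ ha) s)
      have e : d ≅ b := asIso g
      refine star_iso_closed e.symm (ih _ htail b hb ?_ ?_)
      · intro τ hτ p hp μ
        rw [← cancel_mono e.inv, zero_comp]
        exact htop τ hτ p hp (μ ≫ e.inv)
      · intro τ hτ p hp μ
        rw [← cancel_epi e.hom, comp_zero]
        exact hbot τ hτ p hp (e.hom ≫ μ)
    · push_neg at h1
      by_cases h2 : φs 0 < 0
      · -- every phase is negative : d is zero
        have hdz : IsZero d := by
          refine negz σ _ φs hanti d ⟨a, b, f, g, w, ha, hb, hT⟩ ?_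
          intro i p hp μ
          exact hbot _ (lt_of_le_of_lt (hanti.antitone (Fin.zero_le i)) h2) p hp μ
        exact ⟨0, d, 0, 𝟙 d, 0, ExtClosureP.zero _ (isZero_zero C), hzero d hdz,
          contractible_distinguished₁ d⟩
      · push_neg at h2
        have hbotb : ∀ τ, τ < 0 → ∀ p ∈ σ.P τ, ∀ μ : b ⟶ p, μ = 0 := by
          intro τ hτ p hp μ
          obtain ⟨ν, hν⟩ := Triangle.yoneda_exact₂ _ (rot_of_distTriang _ hT) μ
            (hbot τ hτ p hp (g ≫ μ))
          rw [hν, σ.homP _ _ (by linarith) (P_shift_up σ ha) hp ν]; exact comp_zero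
        by_cases h3 : 0 < φs 0
        · -- THE COMBINE CASE : 0 < φs 0 ≤ φ
          have htopb : ∀ τ, φ < τ → ∀ p ∈ σ.P τ, ∀ μ : p ⟶ b, μ = 0 := by
            intro τ hτ p hp μ
            exact hom_into_starFin_zero σ hb (fun i => by linarith [htaillt i]) hp μ
          obtain ⟨a', b', f', g', w', ha', hb', hT2⟩ := ih _ htail b hb htopb hbotb
          -- the cofibre triangle of q = g ≫ g' : d ⟶ b'
          have hfg : f ≫ g = 0 := comp_distTriang_mor_zero₁₂ _ hT
          obtain ⟨Q, vQ, hQ, hTQ⟩ := distinguished_cocone_triangle (g ≫ g')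
          have hT3 : (Triangle.mk (g ≫ g') vQ hQ).invRotate ∈ distTriang C :=
            inv_rot_of_distTriang _ hTQ
          set T3 := (Triangle.mk (g ≫ g') vQ hQ).invRotate with hT3def
          -- γ : T3.obj₁ ⟶ a'
          obtain ⟨γ₁, hγ₁a, hγ₁b⟩ := complete_distinguished_triangle_morphism
            T3.rotate (Triangle.mk f' g' w').rotate
            (rot_of_distTriang _ hT3) (rot_of_distTriang _ hT2) g (𝟙 b')
            (by show (g ≫ g') ≫ 𝟙 b' = g ≫ g'; rw [comp_id])
          have hγ₁b' : T3.mor₁⟦(1:ℤ)⟧' ≫ g⟦(1:ℤ)⟧' = γ₁ ≫ f'⟦(1:ℤ)⟧' := by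
            have := hγ₁b
            change (-(T3.mor₁⟦(1:ℤ)⟧')) ≫ g⟦(1:ℤ)⟧' = γ₁ ≫ (-(f'⟦(1:ℤ)⟧')) at this
            simp only [neg_comp, comp_neg, neg_inj] at this
            exact neg_inj.1 (this.trans (comp_neg _ _))
          set γ : T3.obj₁ ⟶ a' := (shiftFunctor C (1:ℤ)).preimage γ₁ with hγdef
          have hγmap : (shiftFunctor C (1:ℤ)).map γ = γ₁ := Functor.map_preimage _ _
          have hγf' : γ ≫ f' = T3.mor₁ ≫ g := by
            apply (shiftFunctor C (1:ℤ)).map_injective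
            rw [Functor.map_comp, hγmap]
            exact hγ₁b'.symm.trans (Functor.map_comp _ _ _).symm
          -- cofibre of γ
          obtain ⟨G, θG, ωG, hTγ⟩ := distinguished_cocone_triangle γ
          -- χ : G ⟶ a⟦1⟧
          obtain ⟨χ, hχ₁, hχ₂⟩ := complete_distinguished_triangle_morphism
            (Triangle.mk γ θG ωG) (Triangle.mk f g w).rotate
            hTγ (rot_of_distTriang _ hT) T3.mor₁ f' (by exact hγf')
          change G ⟶ a⟦(1:ℤ)⟧ at χ
          change ωG ≫ T3.mor₁⟦(1:ℤ)⟧' = χ ≫ (-(f⟦(1:ℤ)⟧')) at hχ₂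
          -- α : a ⟶ T3.obj₁ lifting f
          obtain ⟨α, hα⟩ := Triangle.coyoneda_exact₂ _ hT3 f
            (by
              show f ≫ T3.mor₂ = 0
              have : T3.mor₂ = g ≫ g' := rfl
              rw [this]; exact (assoc f g g').symm.trans (by rw [hfg]; exact zero_comp))
          have hαγ : α ≫ γ = 0 := by
            obtain ⟨t₀, ht₀⟩ := Triangle.coyoneda_exact₂ _ (inv_rot_of_distTriang _ hT2)
              (α ≫ γ)
              (by
                show (α ≫ γ) ≫ f' = 0
                rw [assoc, hγf']; exact (assoc α T3.mor₁ g).symm.trans (by rw [← hα]; exact hfg))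
            have hb'm : b'⟦(-1:ℤ)⟧ ∈ σ.P (0 - 1) := P_shift_down σ hb'
            have ht00 : t₀ = 0 := σ.homP (φs 0) (0 - 1) (by linarith) ha hb'm t₀
            exact ht₀.trans (by rw [ht00]; exact zero_comp)
          -- ξ : a⟦1⟧ ⟶ G
          obtain ⟨ξ, hξ⟩ := Triangle.coyoneda_exact₁ _ hTγ (α⟦(1:ℤ)⟧')
            (by
              show α⟦(1:ℤ)⟧' ≫ γ⟦(1:ℤ)⟧' = 0
              rw [← Functor.map_comp, hαγ, Functor.map_zero])
          change a⟦(1:ℤ)⟧ ⟶ G at ξ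
          have hξ' : α⟦(1:ℤ)⟧' = ξ ≫ ωG := hξ
          have hrho : (ξ ≫ χ) ≫ f⟦(1:ℤ)⟧' = -(f⟦(1:ℤ)⟧') := by
            have h5 : χ ≫ f⟦(1:ℤ)⟧' = -(ωG ≫ T3.mor₁⟦(1:ℤ)⟧') := by
              have h := hχ₂
              rw [comp_neg] at h
              erw [h, neg_neg]
            erw [assoc, h5]
            erw [comp_neg, ← assoc, ← hξ', ← Functor.map_comp, ← hα]; rfl
          obtain ⟨τ₀, hτ₀⟩ := Triangle.coyoneda_exact₁ _ hT
            ((ξ ≫ χ : a⟦(1:ℤ)⟧ ⟶ a⟦(1:ℤ)⟧) + 𝟙 (a⟦(1:ℤ)⟧))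
            (by
              show ((ξ ≫ χ : a⟦(1:ℤ)⟧ ⟶ a⟦(1:ℤ)⟧) + 𝟙 (a⟦(1:ℤ)⟧)) ≫ f⟦(1:ℤ)⟧' = 0
              rw [add_comp, id_comp, hrho, neg_add_cancel])
          have hτ00 : τ₀ = 0 := hom_into_starFin_zero σ hb
            (fun i => by linarith [htaillt i]) (P_shift_up σ ha) τ₀
          have hξχ : (ξ ≫ χ : a⟦(1:ℤ)⟧ ⟶ a⟦(1:ℤ)⟧) = -(𝟙 (a⟦(1:ℤ)⟧)) := by
            have h6 : (ξ ≫ χ : a⟦(1:ℤ)⟧ ⟶ a⟦(1:ℤ)⟧) + 𝟙 (a⟦(1:ℤ)⟧) = 0 := by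
              rw [hτ₀, hτ00, zero_comp]; rfl
            exact eq_neg_of_add_eq_zero_left h6
          -- the fibre V of χ
          obtain ⟨W₀, vχ, hχ₃, hTχ⟩ := distinguished_cocone_triangle (show G ⟶ a⟦(1:ℤ)⟧ from χ)
          have hTV : (Triangle.mk (show G ⟶ a⟦(1:ℤ)⟧ from χ) vχ hχ₃).invRotate ∈ distTriang C :=
            inv_rot_of_distTriang _ hTχ
          set TV := (Triangle.mk (show G ⟶ a⟦(1:ℤ)⟧ from χ) vχ hχ₃).invRotate with hTVdef
          have hTVmor₂ : TV.mor₂ = χ := rfl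
          have hωV : TV.mor₃ = 0 := by
            have hcons : TV.mor₂ ≫ TV.mor₃ = 0 := comp_distTriang_mor_zero₂₃ _ hTV
            have h7 : TV.mor₃ = (-(ξ ≫ χ)) ≫ TV.mor₃ := by erw [hξχ, neg_neg, id_comp]
            erw [h7, neg_comp, assoc, show χ ≫ TV.mor₃ = 0 from hcons, comp_zero, neg_zero]; rfl
          have hmor1 : TV.invRotate.mor₁ = 0 := by
            dsimp only [Triangle.invRotate]
            rw [show TV.mor₃ = 0 from hωV]
            simp; rfl
          obtain ⟨rV, hrV⟩ := Triangle.yoneda_exact₂ _ (inv_rot_of_distTriang _ hTV)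
            (𝟙 TV.obj₁) (by erw [hmor1, zero_comp])
          -- V-top vanishing
          have hVtop : ∀ τ, φ < τ → ∀ p ∈ σ.P τ, ∀ μv : p ⟶ TV.obj₁, μv = 0 := by
            intro τ hτ p hp μv
            have hjχ : TV.mor₁ ≫ χ = 0 := comp_distTriang_mor_zero₁₂ _ hTV
            have hμ'χ : (μv ≫ TV.mor₁) ≫ χ = 0 := by
              erw [assoc, hjχ, comp_zero]
            have hμω : ((μv ≫ TV.mor₁) ≫ ωG) ≫ T3.mor₁⟦(1:ℤ)⟧' = 0 := by
              erw [assoc, hχ₂]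
              simp only [comp_neg]
              erw [comp_neg, ← assoc, hμ'χ, zero_comp, neg_zero]
            obtain ⟨ϑ, hϑ⟩ := Triangle.coyoneda_exact₁ _ hT3 ((μv ≫ TV.mor₁) ≫ ωG) hμω
            have hϑ0 : ϑ = 0 := σ.homP τ 0 (by linarith) hp hb' ϑ
            have hμω0 : (μv ≫ TV.mor₁) ≫ ωG = 0 := by rw [hϑ, hϑ0, zero_comp]
            obtain ⟨μz, hμz⟩ := Triangle.coyoneda_exact₃ _ hTγ (μv ≫ TV.mor₁) hμω0
            have hμz0 : μz = 0 := hom_into_Ioc_zero σ hτ hp ha' μz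
            have hμ'0 : μv ≫ TV.mor₁ = 0 := by erw [hμz, hμz0, zero_comp]; rfl
            have hrV' : 𝟙 TV.obj₁ = TV.mor₁ ≫ rV := hrV
            calc μv = μv ≫ 𝟙 TV.obj₁ := (comp_id _).symm
              _ = μv ≫ (TV.mor₁ ≫ rV) := by rw [hrV']
              _ = (μv ≫ TV.mor₁) ≫ rV := by erw [assoc]
              _ = 0 := by erw [hμ'0, zero_comp]
          -- bottom vanishing for T3.obj₁, then G, then V
          have hzbot : ∀ τ', τ' < -1 → ∀ p₂ ∈ σ.P τ', ∀ μ : T3.obj₁ ⟶ p₂, μ = 0 := by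
            intro τ' hτ' p₂ hp₂ μ
            obtain ⟨ν, hν⟩ := Triangle.yoneda_exact₂ _ (inv_rot_of_distTriang _ hT3) μ
              (by
                refine σ.homP (0 - 1) τ' (by linarith) ?_ hp₂ _
                exact P_shift_down σ hb')
            erw [hν, hbot τ' (by linarith) p₂ hp₂ ν, comp_zero]; rfl
          have hGbot : ∀ τ, τ < 0 → ∀ p ∈ σ.P τ, ∀ μg : G ⟶ p, μg = 0 := by
            intro τ hτ p hp μg
            obtain ⟨ν₁, hν₁⟩ := Triangle.yoneda_exact₃ _ hTγ μg
              (hom_from_Ioc_zero σ hτ.le hp ha' (θG ≫ μg))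
            have hν₁0 : ν₁ = 0 := by
              refine hom_shift_kill (fun f0 => ?_) ν₁
              have hp' : p⟦(-1:ℤ)⟧ ∈ σ.P (τ - 1) := P_shift_down σ hp
              exact hzbot (τ - 1) (by linarith) _ hp' f0
            rw [hν₁, hν₁0, comp_zero]; rfl
          have hVbot : ∀ τ, τ < 0 → ∀ p ∈ σ.P τ, ∀ μb : TV.obj₁ ⟶ p, μb = 0 := by
            intro τ hτ p hp μb
            obtain ⟨ν₂, hν₂⟩ := Triangle.yoneda_exact₂ _ (inv_rot_of_distTriang _ hTV) μb
              (by erw [hmor1, zero_comp])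
            erw [hν₂, hGbot τ hτ p hp ν₂, comp_zero]; rfl
          -- V lies in the window [0, φ], and Z V = 0, hence V = 0
          obtain ⟨nV, φsV, hantiV, hmemV⟩ := σ.hn TV.obj₁
          have hVL : TV.obj₁ ∈ extClosure (⋃ ψ ∈ Set.Icc (0:ℝ) φ, σ.P ψ) :=
            char σ φ nV φsV hantiV TV.obj₁ hmemV hVtop hVbot
          have hZ1 : σ.Z d = σ.Z a + σ.Z b := σ.additiveZ _ hT
          have hZ3 : σ.Z d = σ.Z T3.obj₁ + σ.Z b' := σ.additiveZ _ hT3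
          have hZ2 : σ.Z b = σ.Z a' + σ.Z b' := σ.additiveZ _ hT2
          have hZγ : σ.Z a' = σ.Z T3.obj₁ + σ.Z G := σ.additiveZ _ hTγ
          have hZV : σ.Z G = σ.Z TV.obj₁ + σ.Z (a⟦(1:ℤ)⟧) := σ.additiveZ _ hTV
          have hZs : σ.Z (a⟦(1:ℤ)⟧) = - σ.Z a := Z_shift σ a
          have hZV0 : σ.Z TV.obj₁ = 0 := by
            linear_combination hZ3 - hZ1 - hZ2 - hZγ - hZV - hZs
          have hVz : IsZero TV.obj₁ := (Z_window σ hφ1 TV.obj₁ hVL).2.2 hZV0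
          have hχiso : IsIso TV.mor₂ := (Triangle.isZero₁_iff_isIso₂ _ hTV).1 hVz
          -- hence T3.obj₁ belongs to the extension closure of P (0, φ]
          have hzA : T3.obj₁ ∈ extClosure (⋃ ψ ∈ Set.Ioc (0:ℝ) φ, σ.P ψ) := by
            refine extClosure_ext' (inv_rot_of_distTriang _ hTγ) ?_ ha'
            have e : a ≅ G⟦(-1:ℤ)⟧ :=
              (shiftEquiv C (1:ℤ)).unitIso.app a ≪≫
                (shiftFunctor C (-1:ℤ)).mapIso (asIso TV.mor₂).symm
            exact ExtClosureP.iso a _ e (ExtClosureP.of a (Set.mem_biUnion ⟨h3, h1⟩ ha))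
          exact ⟨T3.obj₁, b', T3.mor₁, T3.mor₂, T3.mor₃, hzA, hb', hT3⟩
        · -- φs 0 = 0 : the tail is zero and d ∈ P 0
          push_neg at h3
          have h40 : φs 0 = 0 := le_antisymm h3 h2
          have hbz : IsZero b := by
            refine negz σ _ _ htail b hb ?_
            intro i p hp μ
            exact hbotb _ (by rw [← h40]; exact htaillt i) p hp μ
          have hfi : IsIso f := (Triangle.isZero₃_iff_isIso₁ _ hT).1 hbz
          have hd0 : d ∈ σ.P 0 := by
            rw [← h40]
            exact σ.isoP _ (asIso f) ha
          exact ⟨0, d, 0, 𝟙 d, 0, ExtClosureP.zero _ (isZero_zero C), hd0,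
            contractible_distinguished₁ d⟩

end Main

end NoRQ

open ZeroObject in
/-- if there is a stability condition with `P(0,1] = H`, `P(1) = ⟨S⟩` and
`P(0,φ] = S^⊥ ∩ H` for some `0 < φ < 1`, then the right simple tilt
`K = (S^⊥ ∩ H) * ⟨S⟩[-1]` equals `P[0,φ]` and is a length heart. -/
theorem tilt_length_of_stability {X Y : Set C} (hXY : IsLengthHeart X Y)
    (hfin : ∃ F : Set C, F.Finite ∧ simplesOf (heart X Y) ⊆ isoClosure F)
    {S : Set C} (hS : S ⊆ simplesOf (heart X Y))
    (σ : StabilityCondition C) (φ : ℝ) (hφ0 : 0 < φ) (hφ1 : φ < 1)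
    (hH : extClosure (⋃ ψ ∈ Set.Ioc (0 : ℝ) 1, σ.P ψ) = heart X Y)
    (hP1 : σ.P 1 = extClosure S)
    (hPφ : extClosure (⋃ ψ ∈ Set.Ioc (0 : ℝ) φ, σ.P ψ) = rPerp S ∩ heart X Y) :
    star (rPerp S ∩ heart X Y) (shiftSet (extClosure S) (-1)) =
      extClosure (⋃ ψ ∈ Set.Icc (0 : ℝ) φ, σ.P ψ) ∧
    HeartIsLength (star (rPerp S ∩ heart X Y) (shiftSet (extClosure S) (-1))) := by
  classical
  have hB : shiftSet (extClosure S) (-1) = σ.P 0 := by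
    ext x
    constructor
    · rintro ⟨s, hs, ⟨e⟩⟩
      have hs1 : s ∈ σ.P 1 := by rw [hP1]; exact hs
      have hsd := P_shift_down σ hs1
      have h0 : (1:ℝ) - 1 = 0 := by norm_num
      rw [h0] at hsd
      exact σ.isoP 0 e hsd
    · intro hx
      have hx1 : x⟦(1:ℤ)⟧ ∈ extClosure S := by
        rw [← hP1]
        have := P_shift_up σ hx
        rwa [zero_add] at this
      exact ⟨x⟦(1:ℤ)⟧, hx1, ⟨((shiftEquiv C (1:ℤ)).unitIso.app x).symm⟩⟩
  have hzero : ∀ z : C, IsZero z → z ∈ σ.P 0 := by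
    intro z hz
    rw [← hB]
    exact ⟨(0:C), ExtClosureP.zero _ (isZero_zero C),
      ⟨(isZero_shift' (isZero_zero C) _).iso hz⟩⟩
  have hEq : star (rPerp S ∩ heart X Y) (shiftSet (extClosure S) (-1))
      = extClosure (⋃ ψ ∈ Set.Icc (0:ℝ) φ, σ.P ψ) := by
    rw [← hPφ, hB]
    apply Set.Subset.antisymm
    · rintro d ⟨a, b, f, g, w, ha, hb, hT⟩
      refine ExtClosureP.ext a d b f g w hT ?_ (ExtClosureP.of b ?_)
      · refine extClosure_mono ?_ ha
        intro x hx
        simp only [Set.mem_iUnion] at hx ⊢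
        obtain ⟨ψ, hψ, h⟩ := hx
        exact ⟨ψ, ⟨le_of_lt hψ.1, hψ.2⟩, h⟩
      · exact Set.mem_biUnion ⟨le_refl (0:ℝ), le_of_lt hφ0⟩ hb
    · intro d hd
      obtain ⟨n, φs, hanti, hmem⟩ := σ.hn d
      exact main_decomp σ hφ0 hφ1 hzero n φs hanti d hmem
        (fun τ hτ p hp f => hom_into_Icc_zero σ hτ hp hd f)
        (fun τ hτ p hp f => hom_from_Icc_zero σ hτ hp hd f)
  refine ⟨hEq, ?_⟩
  rw [hEq]
  exact σ.support 0 φ (by linarith)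

end SMPaper
end

section
/- Let D = D^b(nilpotent representations of the quiver with one loop at vertex 1 and one arrow 1 → 2) with heart H and simples s₁, s₂. Then the object s₂[1] admits no right ⟨s₁⟩-approximation; consequently, the right simple tilt of H at s₁ is not a length heart. -/
set_option linter.unusedSectionVars false
set_option maxHeartbeats 1000000


open CategoryTheory Category Limits Pretriangulated

universe v u

namespace SMPaper

variable {C : Type u} [Category.{v} C] [Preadditive C] [HasZeroObject C] [HasShift C ℤ]
  [∀ n : ℤ, (shiftFunctor C n).Additive] [Pretriangulated C]

/-! ### Auxiliary lemmas -/

section Aux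

open ZeroObject

lemma zhom_of_iso {a a' b b' : C} (e1 : a ≅ a') (e2 : b ≅ b')
    (h : ∀ f : a ⟶ b, f = 0) (f : a' ⟶ b') : f = 0 := by
  have h0 : e1.hom ≫ f ≫ e2.inv = 0 := h _
  calc f = e1.inv ≫ (e1.hom ≫ f ≫ e2.inv) ≫ e2.hom := by simp
  _ = 0 := by rw [h0]; simp

lemma zhom_shift (n : ℤ) {a b : C} (h : ∀ f : a ⟶ b, f = 0) (f : a⟦n⟧ ⟶ b⟦n⟧) : f = 0 := by
  obtain ⟨g, rfl⟩ := (shiftFunctor C n).map_surjective f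
  rw [h g, Functor.map_zero]

lemma zhom_unshift (n : ℤ) {a b : C} (h : ∀ f : a⟦n⟧ ⟶ b⟦n⟧, f = 0) (f : a ⟶ b) : f = 0 :=
  (shiftFunctor C n).map_injective (by rw [h (f⟦n⟧'), Functor.map_zero])

/-- `a⟦1⟧⟦-1⟧ ≅ a`. -/
noncomputable def sIsoA (a : C) : a⟦(1:ℤ)⟧⟦(-1:ℤ)⟧ ≅ a :=
  (shiftFunctorCompIsoId C 1 (-1) (by norm_num)).app a

/-- `a⟦-1⟧⟦1⟧ ≅ a`. -/
noncomputable def sIsoB (a : C) : a⟦(-1:ℤ)⟧⟦(1:ℤ)⟧ ≅ a :=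
  (shiftFunctorCompIsoId C (-1) 1 (by norm_num)).app a

lemma zhom_negshift {a b : C} (h : ∀ f : a⟦(1:ℤ)⟧ ⟶ b, f = 0) (f : a ⟶ b⟦(-1:ℤ)⟧) : f = 0 := by
  have h2 : f⟦(1:ℤ)⟧' ≫ (sIsoB b).hom = 0 := h _
  have h3 : f⟦(1:ℤ)⟧' = 0 := by
    rw [← comp_id (f⟦(1:ℤ)⟧'), ← (sIsoB b).hom_inv_id, ← assoc, h2, zero_comp]
  exact (shiftFunctor C (1:ℤ)).map_injective (by rw [h3, Functor.map_zero])

lemma zhom_neg2shift {a b : C} (h : ∀ f : a ⟶ b⟦(1:ℤ)⟧⟦(1:ℤ)⟧, f = 0)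
    (f : a⟦(-1:ℤ)⟧ ⟶ b⟦(1:ℤ)⟧) : f = 0 := by
  have h2 : (sIsoB a).inv ≫ f⟦(1:ℤ)⟧' = 0 := h _
  have h3 : f⟦(1:ℤ)⟧' = 0 := by
    rw [← id_comp (f⟦(1:ℤ)⟧'), ← (sIsoB a).hom_inv_id, assoc, h2, comp_zero]
  exact (shiftFunctor C (1:ℤ)).map_injective (by rw [h3, Functor.map_zero])

lemma isZero_of_id_zero {z : C} (h : 𝟙 z = 0) : IsZero z := by
  rw [IsZero.iff_id_eq_zero]; exact h

lemma mem_rPerp_singleton {s d : C} (h : ∀ f : s ⟶ d, f = 0) : d ∈ rPerp {s} := by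
  intro s' hs' f
  rw [Set.mem_singleton_iff] at hs'
  subst hs'
  exact h f

section TS

variable {X Y : Set C}

lemma Xshift1 (hTS : IsTStructure X Y) {x : C} (hx : x ∈ X) : x⟦(1:ℤ)⟧ ∈ X :=
  hTS.shift ⟨x, hx, ⟨Iso.refl _⟩⟩

lemma memX (hTS : IsTStructure X Y) {d : C} (h : ∀ y ∈ Y, ∀ f : d ⟶ y, f = 0) : d ∈ X := by
  obtain ⟨x, y, f, g, w, hx, hy, hT⟩ := hTS.gen d
  have hy0 : IsZero y := by
    obtain ⟨r, hr⟩ := Triangle.yoneda_exact₃ _ hT (𝟙 y) ((comp_id _).trans (h y hy g))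
    rw [IsZero.iff_id_eq_zero, hr, hTS.hom (Xshift1 hTS hx) hy r]; exact comp_zero
  have : IsIso f := (Triangle.isZero₃_iff_isIso₁ _ hT).1 hy0
  exact hTS.isoX (asIso f) hx

lemma memY (hTS : IsTStructure X Y) {d : C} (h : ∀ x ∈ X, ∀ f : x ⟶ d, f = 0) : d ∈ Y := by
  obtain ⟨x, y, f, g, w, hx, hy, hT⟩ := hTS.gen d
  have hx0 : IsZero x := by
    obtain ⟨r, hr⟩ := Triangle.coyoneda_exact₂ _ (inv_rot_of_distTriang _ hT) (𝟙 x)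
      ((id_comp _).trans (h x hx f))
    have hr0 : r = 0 := zhom_negshift (fun ρ => hTS.hom (Xshift1 hTS hx) hy ρ) r
    rw [IsZero.iff_id_eq_zero, hr, hr0]; exact zero_comp
  have : IsIso g := (Triangle.isZero₁_iff_isIso₂ _ hT).1 hx0
  exact hTS.isoY (asIso g).symm hy

lemma hom_shift1_heart (hTS : IsTStructure X Y) {a b : C} (ha : a ∈ X) (hb : b ∈ heart X Y)
    (f : a⟦(1:ℤ)⟧ ⟶ b) : f = 0 := by
  obtain ⟨y, hy, ⟨e⟩⟩ := hb.2
  exact zhom_of_iso (Iso.refl _) e (zhom_shift 1 (hTS.hom ha hy)) f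

lemma hom_heart_neg (hTS : IsTStructure X Y) {a b : C} (ha : a ∈ X) (hb : b ∈ heart X Y)
    (f : a ⟶ b⟦(-1:ℤ)⟧) : f = 0 := by
  obtain ⟨y, hy, ⟨e⟩⟩ := hb.2
  exact zhom_of_iso (Iso.refl a) ((sIsoA y).symm ≪≫ (shiftFunctor C (-1:ℤ)).mapIso e)
    (hTS.hom ha hy) f

lemma heart_iso (hTS : IsTStructure X Y) {a b : C} (e : a ≅ b) (ha : a ∈ heart X Y) :
    b ∈ heart X Y := by
  obtain ⟨y, hy, ⟨e'⟩⟩ := ha.2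
  exact ⟨hTS.isoX e ha.1, y, hy, ⟨e' ≪≫ e⟩⟩

lemma heart_zero (hTS : IsTStructure X Y) {z : C} (h : IsZero z) : z ∈ heart X Y :=
  ⟨hTS.zeroX z h, z, hTS.zeroY z h, ⟨((shiftFunctor C (1:ℤ)).map_isZero h).iso h⟩⟩

lemma heart_ext (hTS : IsTStructure X Y) (T : Triangle C) (hT : T ∈ distTriang C)
    (h1 : T.obj₁ ∈ heart X Y) (h3 : T.obj₃ ∈ heart X Y) : T.obj₂ ∈ heart X Y := by
  constructor
  · apply memX hTS
    intro z hz φ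
    obtain ⟨ψ, hψ⟩ := Triangle.yoneda_exact₂ _ hT φ (hTS.hom h1.1 hz _)
    rw [hψ, hTS.hom h3.1 hz ψ, comp_zero]
  · refine ⟨(T.obj₂)⟦(-1:ℤ)⟧, ?_, ⟨sIsoB _⟩⟩
    apply memY hTS
    intro x' hx' φ
    apply zhom_negshift (fun ψ => ?_) φ
    obtain ⟨χ, hχ⟩ := Triangle.coyoneda_exact₂ _ hT ψ (hom_shift1_heart hTS hx' h3 _)
    rw [hχ, hom_shift1_heart hTS hx' h1 χ, zero_comp]

lemma extClosure_sub_heart (hTS : IsTStructure X Y) {S : Set C} (hS : S ⊆ heart X Y) :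
    extClosure S ⊆ heart X Y := by
  intro d hd
  induction hd with
  | of s hs => exact hS hs
  | zero z hz => exact heart_zero hTS hz
  | iso x y e _ ih => exact heart_iso hTS e ih
  | ext a d b f g w hT _ _ iha ihb => exact heart_ext hTS _ hT iha ihb

/-- Key vanishing: any morphism between two non-isomorphic simple objects of the heart
is zero. -/
lemma hom_simple_simple_zero (hTS : IsTStructure X Y) {s₁ s₂ : C}
    (h1 : IsSimpleIn (heart X Y) s₁) (h2 : IsSimpleIn (heart X Y) s₂)
    (hne : ¬ Nonempty (s₁ ≅ s₂)) (f : s₁ ⟶ s₂) : f = 0 := by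
  obtain ⟨c, g, w, hTf⟩ := distinguished_cocone_triangle f
  set T : Triangle C := Triangle.mk f g w with hTdef
  have hTc' : T.invRotate ∈ distTriang C := inv_rot_of_distTriang _ hTf
  obtain ⟨x, y, u, v, θ, hx, hy, hTx⟩ := hTS.gen (c⟦(-1:ℤ)⟧)
  set Tx : Triangle C := Triangle.mk u v θ with hTxdef
  -- the cone is in the aisle
  have hcX : c ∈ X := by
    apply memX hTS
    intro z hz φ
    obtain ⟨ψ, hψ⟩ := Triangle.yoneda_exact₂ _ (rot_of_distTriang _ hTf) φ
      (hTS.hom h2.1.1 hz _)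
    rw [hψ, hTS.hom (Xshift1 hTS h1.1.1) hz ψ]; exact comp_zero
  -- x is in the heart
  have hxheart : x ∈ heart X Y := by
    refine ⟨hx, x⟦(-1:ℤ)⟧, ?_, ⟨sIsoB _⟩⟩
    apply memY hTS
    intro x' hx' φ
    apply zhom_negshift (fun ψ => ?_) φ
    -- ψ : x'⟦1⟧ ⟶ x
    have hum : (ψ ≫ u) ≫ T.invRotate.mor₁ = 0 := by
      refine (assoc _ _ _).trans ?_
      exact hom_shift1_heart hTS hx' h1.1 _
    obtain ⟨χ, hχ⟩ := Triangle.coyoneda_exact₂ _ (inv_rot_of_distTriang _ hTc') (ψ ≫ u) hum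
    have hχ0 : χ = 0 :=
      zhom_negshift (fun ρ => hom_shift1_heart hTS (Xshift1 hTS hx') h2.1 ρ) χ
    have hu0 : ψ ≫ u = 0 := hχ.trans (by rw [hχ0]; exact zero_comp)
    obtain ⟨χ₂, hχ₂⟩ := Triangle.coyoneda_exact₂ _ (inv_rot_of_distTriang _ hTx) ψ
      (by exact hu0)
    have hχ₂0 : χ₂ = 0 :=
      zhom_negshift (fun ρ => hTS.hom (Xshift1 hTS (Xshift1 hTS hx')) hy ρ) χ₂
    rw [hχ₂, hχ₂0]; exact zero_comp
  -- y⟦1⟧ is in the heart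
  have hyheart : y⟦(1:ℤ)⟧ ∈ heart X Y := by
    refine ⟨?_, y, hy, ⟨Iso.refl _⟩⟩
    apply memX hTS
    intro z hz φ
    have hc1 : ∀ ρ : (c⟦(-1:ℤ)⟧)⟦(1:ℤ)⟧ ⟶ z, ρ = 0 :=
      zhom_of_iso (sIsoB c).symm (Iso.refl z) (hTS.hom hcX hz)
    obtain ⟨ψ, hψ⟩ := Triangle.yoneda_exact₂ _
      (rot_of_distTriang _ (rot_of_distTriang _ (rot_of_distTriang _
        (rot_of_distTriang _ hTx)))) φ (hc1 _)
    rw [hψ, hTS.hom (Xshift1 hTS (Xshift1 hTS hx)) hz ψ]; exact comp_zero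
  -- the image triangle
  obtain ⟨I, β, γ, hTI⟩ := distinguished_cocone_triangle (u ≫ T.invRotate.mor₁)
  set TI : Triangle C := Triangle.mk (u ≫ T.invRotate.mor₁) β γ with hTIdef
  have hIheart : I ∈ heart X Y := by
    constructor
    · apply memX hTS
      intro z hz φ
      obtain ⟨ψ, hψ⟩ := Triangle.yoneda_exact₂ _ (rot_of_distTriang _ hTI) φ
        (hTS.hom h1.1.1 hz _)
      rw [hψ, hTS.hom (Xshift1 hTS hx) hz ψ]; exact comp_zero
    · refine ⟨I⟦(-1:ℤ)⟧, ?_, ⟨sIsoB _⟩⟩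
      apply memY hTS
      intro x' hx' φ
      apply zhom_negshift (fun ψ => ?_) φ
      -- ψ : x'⟦1⟧ ⟶ I
      obtain ⟨χ, hχ⟩ := (shiftFunctor C (1:ℤ)).map_surjective (ψ ≫ γ)
      have hz31 : γ ≫ (u ≫ T.invRotate.mor₁)⟦(1:ℤ)⟧' = 0 :=
        comp_distTriang_mor_zero₃₁ _ hTI
      have hχα : χ ≫ (u ≫ T.invRotate.mor₁) = 0 := by
        apply (shiftFunctor C (1:ℤ)).map_injective
        rw [Functor.map_comp, hχ, Functor.map_zero, assoc, hz31, comp_zero]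
      have hχu : (χ ≫ u) ≫ T.invRotate.mor₁ = 0 := (assoc _ _ _).trans hχα
      obtain ⟨χ₂, hχ₂⟩ := Triangle.coyoneda_exact₂ _ (inv_rot_of_distTriang _ hTc') (χ ≫ u) hχu
      have hχ₂0 : χ₂ = 0 := hom_heart_neg hTS hx' h2.1 χ₂
      have hχu0 : χ ≫ u = 0 := hχ₂.trans (by rw [hχ₂0]; exact zero_comp)
      obtain ⟨χ₃, hχ₃⟩ := Triangle.coyoneda_exact₂ _ (inv_rot_of_distTriang _ hTx) χ
        (by exact hχu0)
      have hχ₃0 : χ₃ = 0 :=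
        zhom_negshift (fun ρ => hTS.hom (Xshift1 hTS hx') hy ρ) χ₃
      have hχ0 : χ = 0 := by rw [hχ₃, hχ₃0]; exact zero_comp
      have hγ0 : ψ ≫ γ = 0 := by rw [← hχ, hχ0, Functor.map_zero]
      obtain ⟨χ₄, hχ₄⟩ := Triangle.coyoneda_exact₃ _ hTI ψ (by exact hγ0)
      rw [hχ₄, hom_shift1_heart hTS hx' h1.1 χ₄]; exact zero_comp
  -- apply simplicity of s₁
  rcases h1.2.2 x I (u ≫ T.invRotate.mor₁) β γ hxheart hIheart hTI with hxz | hIz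
  · -- x is zero, so the cone is in the heart; apply simplicity of s₂
    have hcheart : c ∈ heart X Y := by
      refine ⟨hcX, c⟦(-1:ℤ)⟧, ?_, ⟨sIsoB _⟩⟩
      apply memY hTS
      intro x' hx' φ
      obtain ⟨ψ, hψ⟩ := Triangle.coyoneda_exact₂ _ hTx φ (hTS.hom hx' hy _)
      rw [hψ, hxz.eq_of_tgt ψ 0]; exact zero_comp
    rcases h2.2.2 s₁ c f g w h1.1 hcheart hTf with hs1z | hcz
    · exact absurd hs1z h1.2.1
    · have : IsIso f := (Triangle.isZero₃_iff_isIso₁ _ hTf).1 hcz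
      exact absurd ⟨asIso f⟩ hne
  · -- I is zero, so f factors through zero
    obtain ⟨ρ, hρ⟩ := Triangle.coyoneda_exact₂ _ hTI (𝟙 s₁) (hIz.eq_of_tgt _ _)
    have hmf : T.invRotate.mor₁ ≫ f = 0 := comp_distTriang_mor_zero₁₂ _ hTc'
    calc f = (𝟙 s₁) ≫ f := (id_comp f).symm
    _ = (ρ ≫ TI.mor₁) ≫ f := by exact congrArg (· ≫ f) hρ
    _ = ρ ≫ u ≫ (T.invRotate.mor₁ ≫ f) := by
        show (ρ ≫ (u ≫ T.invRotate.mor₁)) ≫ f = _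
        exact (assoc _ _ _).trans (congrArg (ρ ≫ ·) (assoc _ _ _))
    _ = 0 := by exact (congrArg (ρ ≫ ·) ((congrArg (u ≫ ·) hmf).trans comp_zero)).trans comp_zero

end TS


section LinearAux

variable (k : Type*) [Field k]

lemma inj_of_kerzero {A B : Type*} [AddCommGroup A] [Module k A] [AddCommGroup B] [Module k B]
    (f : A →ₗ[k] B) (h : ∀ a, f a = 0 → a = 0) : Function.Injective f := by
  intro a a' hh
  have := h (a - a') (by rw [map_sub, hh, sub_self])
  exact sub_eq_zero.1 this

lemma fr_exact {A B D : Type*} [AddCommGroup A] [Module k A] [AddCommGroup B] [Module k B]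
    [Module.Finite k B] [AddCommGroup D] [Module k D]
    (f : A →ₗ[k] B) (g : B →ₗ[k] D)
    (h0 : ∀ a, g (f a) = 0) (hf : ∀ b, g b = 0 → ∃ a, f a = b) :
    Module.finrank k B
      = Module.finrank k (LinearMap.range f) + Module.finrank k (LinearMap.range g) := by
  have hker : LinearMap.ker g = LinearMap.range f := by
    ext b
    constructor
    · intro hb
      exact hf b hb
    · rintro ⟨a, rfl⟩
      exact h0 a
  have h2 := LinearMap.finrank_range_add_finrank_ker g
  rw [hker] at h2
  omega

lemma fr_range_inj {A B : Type*} [AddCommGroup A] [Module k A] [AddCommGroup B] [Module k B]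
    (f : A →ₗ[k] B) (h : Function.Injective f) :
    Module.finrank k (LinearMap.range f) = Module.finrank k A :=
  (LinearEquiv.ofInjective f h).finrank_eq.symm

lemma fr_range_surj {B D : Type*} [AddCommGroup B] [Module k B] [AddCommGroup D] [Module k D]
    (g : B →ₗ[k] D) (h : Function.Surjective g) :
    Module.finrank k (LinearMap.range g) = Module.finrank k D := by
  rw [LinearMap.range_eq_top.2 h]
  exact finrank_top k D

lemma fr_le_surj {B D : Type*} [AddCommGroup B] [Module k B] [Module.Finite k B]
    [AddCommGroup D] [Module k D] (g : B →ₗ[k] D) (h : Function.Surjective g) :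
    Module.finrank k D ≤ Module.finrank k B := by
  rw [← fr_range_surj k g h]
  exact LinearMap.finrank_range_le g

variable [Linear k C] [∀ x y : C, Module.Finite k (x ⟶ y)]

/-- Post-composition with an isomorphism, as a linear equivalence. -/
noncomputable def homIso (a : C) {b b' : C} (e : b ≅ b') : (a ⟶ b) ≃ₗ[k] (a ⟶ b') :=
  LinearEquiv.ofLinear (Linear.rightComp k a e.hom) (Linear.rightComp k a e.inv)
    (by ext f; simp) (by ext f; simp)

lemma fr_zero_of_allzero {a b : C} (h : ∀ f : a ⟶ b, f = 0) :
    Module.finrank k (a ⟶ b) = 0 := by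
  have : Subsingleton (a ⟶ b) := ⟨fun f g => by rw [h f, h g]⟩
  exact Module.finrank_zero_of_subsingleton

lemma exists_ne_zero_of_fr_ne {a b : C} (h : Module.finrank k (a ⟶ b) ≠ 0) :
    ∃ f : a ⟶ b, f ≠ 0 := by
  by_contra hc
  push_neg at hc
  exact h (fr_zero_of_allzero k (by simpa using hc))

lemma hom_eq_smul_id {s : C} (h : Module.finrank k (s ⟶ s) = 1) (hnz : ¬ IsZero s)
    (f : s ⟶ s) : ∃ c : k, f = c • 𝟙 s := by
  have hid : (𝟙 s) ≠ 0 := fun h0 => hnz (isZero_of_id_zero h0)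
  have hs : Submodule.span k {(𝟙 s)} = ⊤ := by
    apply Submodule.eq_top_of_finrank_eq
    rw [finrank_span_singleton hid, h]
  have hmem : f ∈ Submodule.span k ({(𝟙 s)} : Set (s ⟶ s)) := by rw [hs]; trivial
  obtain ⟨c, hc⟩ := Submodule.mem_span_singleton.1 hmem
  exact ⟨c, hc.symm⟩

/-- The Euler characteristic inequality: for objects with finite composition series,
`dim Hom(s₁, u) ≤ dim Hom(s₁, u[1])`, with equality only for objects filtered by `s₁`. -/
lemma chi {X Y : Set C} (hTS : IsTStructure X Y) {s₁ s₂ : C}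
    (h1H : s₁ ∈ heart X Y)
    (hsimples : simplesOf (heart X Y) = isoClosure {s₁, s₂})
    (hhered : ∀ a b : C, a ∈ heart X Y → b ∈ heart X Y →
      ∀ n : ℤ, 2 ≤ n → ∀ f : a ⟶ (shiftFunctor C n).obj b, f = 0)
    (hEnd₁ : Module.finrank k (s₁ ⟶ s₁) = 1)
    (hExt₁₁ : Module.finrank k (s₁ ⟶ s₁⟦(1:ℤ)⟧) = 1)
    (hExt₁₂ : Module.finrank k (s₁ ⟶ s₂⟦(1:ℤ)⟧) = 1)
    (h12 : ∀ f : s₁ ⟶ s₂, f = 0)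
    {u : C} (hu : ExtClosureP (simplesOf (heart X Y)) u) :
    Module.finrank k (s₁ ⟶ u) ≤ Module.finrank k (s₁ ⟶ u⟦(1:ℤ)⟧) ∧
      (Module.finrank k (s₁ ⟶ u) = Module.finrank k (s₁ ⟶ u⟦(1:ℤ)⟧) →
        ExtClosureP {s₁} u) := by
  have hsub : extClosure (simplesOf (heart X Y)) ⊆ heart X Y :=
    extClosure_sub_heart hTS (fun s hs => hs.1)
  induction hu with
  | of s hs =>
      have hs' := hs
      rw [hsimples] at hs'
      obtain ⟨t, ht, ⟨e⟩⟩ := hs'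
      have e1 : Module.finrank k (s₁ ⟶ t) = Module.finrank k (s₁ ⟶ s) :=
        (homIso k s₁ e).finrank_eq
      have e2 : Module.finrank k (s₁ ⟶ t⟦(1:ℤ)⟧) = Module.finrank k (s₁ ⟶ s⟦(1:ℤ)⟧) :=
        (homIso k s₁ ((shiftFunctor C (1:ℤ)).mapIso e)).finrank_eq
      rcases ht with rfl | ht
      · constructor
        · rw [← e1, ← e2, hEnd₁, hExt₁₁]
        · intro _
          exact ExtClosureP.iso t s e (ExtClosureP.of t rfl)
      · rw [Set.mem_singleton_iff] at ht
        subst ht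
        rw [← e1, ← e2, fr_zero_of_allzero k h12, hExt₁₂]
        exact ⟨Nat.zero_le 1, fun h => absurd h (by omega)⟩
  | zero z hz =>
      have hz1 : IsZero (z⟦(1:ℤ)⟧) := (shiftFunctor C (1:ℤ)).map_isZero hz
      rw [fr_zero_of_allzero k (fun f => hz.eq_of_tgt f 0),
          fr_zero_of_allzero k (fun f => hz1.eq_of_tgt f 0)]
      exact ⟨le_refl 0, fun _ => ExtClosureP.zero z hz⟩
  | iso a b e _ ih =>
      have e1 := (homIso k s₁ e).finrank_eq
      have e2 := (homIso k s₁ ((shiftFunctor C (1:ℤ)).mapIso e)).finrank_eq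
      rw [← e1, ← e2]
      exact ⟨ih.1, fun h => ExtClosureP.iso a b e (ih.2 h)⟩
  | ext a d b f g w hT ha hb iha ihb =>
      have haH : a ∈ heart X Y := hsub ha
      have hbH : b ∈ heart X Y := hsub hb
      have hc12 : f ≫ g = 0 := comp_distTriang_mor_zero₁₂ _ hT
      have hc23 : g ≫ w = 0 := comp_distTriang_mor_zero₂₃ _ hT
      have hc31 : w ≫ f⟦(1:ℤ)⟧' = 0 := comp_distTriang_mor_zero₃₁ _ hT
      have hc12' : f⟦(1:ℤ)⟧' ≫ g⟦(1:ℤ)⟧' = 0 := by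
        rw [← Functor.map_comp, hc12, Functor.map_zero]
      have hrot3 := rot_of_distTriang _ (rot_of_distTriang _ (rot_of_distTriang _ hT))
      set g₁ : (s₁ ⟶ a) →ₗ[k] (s₁ ⟶ d) := Linear.rightComp k s₁ f with hg₁
      set g₂ : (s₁ ⟶ d) →ₗ[k] (s₁ ⟶ b) := Linear.rightComp k s₁ g with hg₂
      set g₃ : (s₁ ⟶ b) →ₗ[k] (s₁ ⟶ a⟦(1:ℤ)⟧) := Linear.rightComp k s₁ w with hg₃
      set g₄ : (s₁ ⟶ a⟦(1:ℤ)⟧) →ₗ[k] (s₁ ⟶ d⟦(1:ℤ)⟧) :=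
        Linear.rightComp k s₁ (f⟦(1:ℤ)⟧') with hg₄
      set g₅ : (s₁ ⟶ d⟦(1:ℤ)⟧) →ₗ[k] (s₁ ⟶ b⟦(1:ℤ)⟧) :=
        Linear.rightComp k s₁ (g⟦(1:ℤ)⟧') with hg₅
      have E2 := fr_exact k g₁ g₂
        (fun φ => show (φ ≫ f) ≫ g = 0 by rw [assoc, hc12, comp_zero])
        (fun φ hφ => by
          obtain ⟨ψ, hψ⟩ := Triangle.coyoneda_exact₂ _ hT φ hφ
          exact ⟨ψ, hψ.symm⟩)
      have E3 := fr_exact k g₂ g₃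
        (fun φ => show (φ ≫ g) ≫ w = 0 by rw [assoc, hc23, comp_zero])
        (fun φ hφ => by
          obtain ⟨ψ, hψ⟩ := Triangle.coyoneda_exact₃ _ hT φ hφ
          exact ⟨ψ, hψ.symm⟩)
      have E4 := fr_exact k g₃ g₄
        (fun φ => show (φ ≫ w) ≫ f⟦(1:ℤ)⟧' = 0 by rw [assoc, hc31, comp_zero])
        (fun φ hφ => by
          obtain ⟨ψ, hψ⟩ := Triangle.coyoneda_exact₁ _ hT φ hφ
          exact ⟨ψ, hψ.symm⟩)
      have E5 := fr_exact k g₄ g₅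
        (fun φ => show (φ ≫ f⟦(1:ℤ)⟧') ≫ g⟦(1:ℤ)⟧' = 0 by rw [assoc, hc12', comp_zero])
        (fun φ hφ => by
          have hφ' : φ ≫ g⟦(1:ℤ)⟧' = 0 := hφ
          obtain ⟨ψ, hψ⟩ := Triangle.coyoneda_exact₂ _ hrot3 φ
            (show φ ≫ (-(g⟦(1:ℤ)⟧')) = 0 by rw [Preadditive.comp_neg, hφ', neg_zero])
          have hψ' : φ = ψ ≫ (-(f⟦(1:ℤ)⟧')) := hψ
          refine ⟨-ψ, ?_⟩
          show (-ψ) ≫ f⟦(1:ℤ)⟧' = φ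
          rw [hψ']; exact (Preadditive.neg_comp _ _).trans (Preadditive.comp_neg _ _).symm
        )
      have hg₁inj : Function.Injective g₁ := by
        apply inj_of_kerzero
        intro φ hφ
        obtain ⟨ψ, hψ⟩ := Triangle.coyoneda_exact₂ _ (inv_rot_of_distTriang _ hT) φ hφ
        rw [hψ, hom_heart_neg hTS h1H.1 hbH ψ]; exact zero_comp
      have hg₅surj : Function.Surjective g₅ := by
        intro φ
        have hvan : ∀ ρ : s₁ ⟶ (a⟦(1:ℤ)⟧)⟦(1:ℤ)⟧, ρ = 0 :=
          zhom_of_iso (Iso.refl s₁) ((shiftFunctorAdd' C 1 1 2 (by norm_num)).app a)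
            (hhered s₁ a h1H haH 2 (by norm_num))
        obtain ⟨ψ, hψ⟩ := Triangle.coyoneda_exact₃ _ hrot3 φ
          (show φ ≫ (-(w⟦(1:ℤ)⟧')) = 0 by rw [Preadditive.comp_neg, hvan (φ ≫ w⟦(1:ℤ)⟧'), neg_zero])
        have hψ' : φ = ψ ≫ (-(g⟦(1:ℤ)⟧')) := hψ
        refine ⟨-ψ, ?_⟩
        show (-ψ) ≫ g⟦(1:ℤ)⟧' = φ
        rw [hψ']; exact (Preadditive.neg_comp _ _).trans (Preadditive.comp_neg _ _).symm
      have r1 := fr_range_inj k g₁ hg₁inj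
      have r5 := fr_range_surj k g₅ hg₅surj
      obtain ⟨la, ia⟩ := iha
      obtain ⟨lb, ib⟩ := ihb
      constructor
      · omega
      · intro hEq
        have hAB : Module.finrank k (s₁ ⟶ a) = Module.finrank k (s₁ ⟶ a⟦(1:ℤ)⟧) ∧
            Module.finrank k (s₁ ⟶ b) = Module.finrank k (s₁ ⟶ b⟦(1:ℤ)⟧) := by omega
        exact ExtClosureP.ext a d b f g w hT (ia hAB.1) (ib hAB.2)

/-- Every nonzero object filtered by `s₁` receives a nonzero map from `s₁`. -/
lemma socle {X Y : Set C} (hTS : IsTStructure X Y) {s₁ : C} (h1H : s₁ ∈ heart X Y)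
    (hnz : ¬ IsZero s₁) {u : C} (hu : ExtClosureP {s₁} u) :
    IsZero u ∨ ∃ f : s₁ ⟶ u, f ≠ 0 := by
  have hsub : extClosure ({s₁} : Set C) ⊆ heart X Y :=
    extClosure_sub_heart hTS
      (by intro s hs; rw [Set.mem_singleton_iff] at hs; subst hs; exact h1H)
  induction hu with
  | of s hs =>
      rw [Set.mem_singleton_iff] at hs
      subst hs
      exact Or.inr ⟨𝟙 s, fun h0 => hnz (isZero_of_id_zero h0)⟩
  | zero z hz => exact Or.inl hz
  | iso a b e _ ih =>
      rcases ih with hz | ⟨φ, hφ⟩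
      · exact Or.inl (hz.of_iso e.symm)
      · refine Or.inr ⟨φ ≫ e.hom, fun h0 => hφ ?_⟩
        calc φ = (φ ≫ e.hom) ≫ e.inv := by simp
        _ = 0 := by rw [h0, zero_comp]
  | ext a d b f g w hT ha hb iha ihb =>
      by_cases hza : IsZero a
      · rcases ihb with hzb | ⟨φ, hφ⟩
        · exact Or.inl (Triangle.isZero₂_of_isZero₁₃ _ hT hza hzb)
        · have hiso : IsIso g := (Triangle.isZero₁_iff_isIso₂ _ hT).1 hza
          refine Or.inr ⟨φ ≫ inv g, fun h0 => hφ ?_⟩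
          calc φ = (φ ≫ inv g) ≫ g := by simp
          _ = 0 := by rw [h0, zero_comp]
      · rcases iha with hza' | ⟨φ, hφ⟩
        · exact absurd hza' hza
        · refine Or.inr ⟨φ ≫ f, fun h0 => hφ ?_⟩
          obtain ⟨ψ, hψ⟩ := Triangle.coyoneda_exact₂ _ (inv_rot_of_distTriang _ hT) φ h0
          rw [hψ, hom_heart_neg hTS h1H.1 (hsub hb) ψ]; exact zero_comp

end LinearAux



/-- The invariant carried along the tower of iterated self-extensions of `s₁`. -/
def TowerProp (k : Type*) [Field k] [Linear k C] (X Y : Set C) (s₁ s₂ : C)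
    (p : (x : C) ×' (s₁ ⟶ x)) (n : ℕ) : Prop :=
  ExtClosureP ({s₁} : Set C) p.1 ∧
  (∀ q : C, q ∈ heart X Y → ∀ φ : s₁ ⟶ q⟦(1:ℤ)⟧, ∃ ψ : p.1 ⟶ q⟦(1:ℤ)⟧, p.2 ≫ ψ = φ) ∧
  Module.finrank k (p.1 ⟶ s₁) ≤ 1 ∧
  n + 1 ≤ Module.finrank k (p.1 ⟶ s₂⟦(1:ℤ)⟧)

lemma tower_exists (k : Type*) [Field k] [Linear k C] [∀ x y : C, Module.Finite k (x ⟶ y)]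
    {X Y : Set C} (hTS : IsTStructure X Y) {s₁ s₂ : C}
    (hs1H : s₁ ∈ heart X Y) (hs2H : s₂ ∈ heart X Y) (hnz1 : ¬ IsZero s₁)
    (hhered : ∀ a b : C, a ∈ heart X Y → b ∈ heart X Y →
      ∀ n : ℤ, 2 ≤ n → ∀ f : a ⟶ (shiftFunctor C n).obj b, f = 0)
    (hEnd₁ : Module.finrank k (s₁ ⟶ s₁) = 1)
    (hExt₁₁ : Module.finrank k (s₁ ⟶ s₁⟦(1:ℤ)⟧) = 1)
    (hExt₁₂ : Module.finrank k (s₁ ⟶ s₂⟦(1:ℤ)⟧) = 1)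
    (key : ∀ f : s₁ ⟶ s₂, f = 0) :
    ∃ t : ℕ → ((x : C) ×' (s₁ ⟶ x)),
      ∀ n : ℕ, ExtClosureP ({s₁} : Set C) (t n).1 ∧
        Module.finrank k ((t n).1 ⟶ s₁) ≤ 1 ∧
        n + 1 ≤ Module.finrank k ((t n).1 ⟶ s₂⟦(1:ℤ)⟧) := by
  classical
  have hsubE : extClosure ({s₁} : Set C) ⊆ heart X Y :=
    extClosure_sub_heart hTS
      (by intro s hs; rw [Set.mem_singleton_iff] at hs; subst hs; exact hs1H)
  have hbase : TowerProp k X Y s₁ s₂ ⟨s₁, 𝟙 s₁⟩ 0 := by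
    refine ⟨ExtClosureP.of s₁ rfl, fun q hq φ => ⟨φ, id_comp φ⟩, le_of_eq hEnd₁, ?_⟩
    rw [hExt₁₂]
  have hstep : ∀ (n : ℕ) (p : (x : C) ×' (s₁ ⟶ x)),
      TowerProp k X Y s₁ s₂ p n → ∃ p', TowerProp k X Y s₁ s₂ p' (n+1) := by
    rintro n ⟨x, ι⟩ ⟨hxE, hlift, hd1, hd2⟩
    have hxH : x ∈ heart X Y := hsubE hxE
    obtain ⟨φ₁, hφ₁⟩ := exists_ne_zero_of_fr_ne k (a := s₁) (b := s₁⟦(1:ℤ)⟧)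
      (by rw [hExt₁₁]; omega)
    obtain ⟨wn, hwn⟩ := hlift s₁ hs1H φ₁
    have hwn0 : wn ≠ 0 := fun h0 => hφ₁ (by rw [← hwn, h0, comp_zero])
    obtain ⟨x', ι', pr, hT⟩ := distinguished_cocone_triangle₂ wn
    have hx'E : ExtClosureP ({s₁} : Set C) x' :=
      ExtClosureP.ext s₁ x' x ι' pr wn hT (ExtClosureP.of s₁ rfl) hxE
    have hx'H : x' ∈ heart X Y := hsubE hx'E
    have hlift' : ∀ q : C, q ∈ heart X Y → ∀ φ : s₁ ⟶ q⟦(1:ℤ)⟧,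
        ∃ ψ : x' ⟶ q⟦(1:ℤ)⟧, ι' ≫ ψ = φ := by
      intro q hq φ
      have hvan : ∀ ρ : x ⟶ (q⟦(1:ℤ)⟧)⟦(1:ℤ)⟧, ρ = 0 :=
        zhom_of_iso (Iso.refl x) ((shiftFunctorAdd' C 1 1 2 (by norm_num)).app q)
          (hhered x q hxH hq 2 (by norm_num))
      have hcond : (Triangle.mk ι' pr wn).invRotate.mor₁ ≫ φ = 0 :=
        zhom_neg2shift hvan _
      obtain ⟨ψ, hψ⟩ := Triangle.yoneda_exact₂ _ (inv_rot_of_distTriang _ hT) φ hcond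
      exact ⟨ψ, hψ.symm⟩
    have h31 : wn ≫ ι'⟦(1:ℤ)⟧' = 0 := comp_distTriang_mor_zero₃₁ _ hT
    have hkill : ∀ h' : x' ⟶ s₁, ι' ≫ h' = 0 := by
      intro h'
      obtain ⟨c, hc⟩ := hom_eq_smul_id k hEnd₁ hnz1 (ι' ≫ h')
      by_cases hc0 : c = 0
      · rw [hc, hc0, zero_smul]
      · exfalso
        apply hwn0
        have hid : ι' ≫ (c⁻¹ • h') = 𝟙 s₁ := by
          rw [Linear.comp_smul, hc, smul_smul, inv_mul_cancel₀ hc0, one_smul]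
        calc wn = wn ≫ (𝟙 s₁)⟦(1:ℤ)⟧' := by rw [CategoryTheory.Functor.map_id, comp_id]
        _ = wn ≫ (ι' ≫ (c⁻¹ • h'))⟦(1:ℤ)⟧' := by rw [hid]
        _ = (wn ≫ ι'⟦(1:ℤ)⟧') ≫ (c⁻¹ • h')⟦(1:ℤ)⟧' := by rw [Functor.map_comp, assoc]
        _ = 0 := by rw [h31, zero_comp]
    have hd1' : Module.finrank k (x' ⟶ s₁) ≤ 1 := by
      have hsurj : Function.Surjective
          (Linear.leftComp k s₁ pr : (x ⟶ s₁) →ₗ[k] (x' ⟶ s₁)) := by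
        intro h'
        obtain ⟨ψ, hψ⟩ := Triangle.yoneda_exact₂ _ hT h' (hkill h')
        exact ⟨ψ, hψ.symm⟩
      exact le_trans (fr_le_surj k _ hsurj) hd1
    have hq₁inj : Function.Injective
        (Linear.leftComp k (s₂⟦(1:ℤ)⟧) pr : (x ⟶ s₂⟦(1:ℤ)⟧) →ₗ[k] (x' ⟶ s₂⟦(1:ℤ)⟧)) := by
      apply inj_of_kerzero
      intro φ hφ
      obtain ⟨ψ, hψ⟩ := Triangle.yoneda_exact₃ _ hT φ hφ
      rw [hψ, zhom_shift 1 key ψ]; exact comp_zero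
    have hq₂surj : Function.Surjective
        (Linear.leftComp k (s₂⟦(1:ℤ)⟧) ι' : (x' ⟶ s₂⟦(1:ℤ)⟧) →ₗ[k] (s₁ ⟶ s₂⟦(1:ℤ)⟧)) := by
      intro φ
      exact hlift' s₂ hs2H φ
    have hc12 : ι' ≫ pr = 0 := comp_distTriang_mor_zero₁₂ _ hT
    have hE := fr_exact k (Linear.leftComp k (s₂⟦(1:ℤ)⟧) pr) (Linear.leftComp k (s₂⟦(1:ℤ)⟧) ι')
      (fun φ => show ι' ≫ (pr ≫ φ) = 0 by
        rw [← assoc, hc12, zero_comp])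
      (fun φ hφ => by
        obtain ⟨ψ, hψ⟩ := Triangle.yoneda_exact₂ _ hT φ hφ
        exact ⟨ψ, hψ.symm⟩)
    rw [fr_range_inj k _ hq₁inj, fr_range_surj k _ hq₂surj, hExt₁₂] at hE
    exact ⟨⟨x', ι'⟩, hx'E, hlift', hd1', by rw [hE]; exact Nat.add_le_add_right hd2 1⟩
  let t : ∀ n : ℕ, {p : (x : C) ×' (s₁ ⟶ x) // TowerProp k X Y s₁ s₂ p n} := fun n =>
    Nat.rec ⟨⟨s₁, 𝟙 s₁⟩, hbase⟩
      (fun m q => ⟨(hstep m q.1 q.2).choose, (hstep m q.1 q.2).choose_spec⟩) n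
  exact ⟨fun n => (t n).1, fun n => ⟨(t n).2.1, (t n).2.2.2.1, (t n).2.2.2.2⟩⟩


end Aux

open ZeroObject

/-- in `D = D^b(nil Q)` for the quiver `Q` with a loop at vertex `1` and an
arrow `1 → 2` (characterised here as a bounded hereditary length heart `H` with exactly
two simples `s₁, s₂`, `End(sᵢ) = k`, `Ext¹(s₁, s₁) = k = Ext¹(s₁, s₂)` and
`Ext¹(s₂, s₁) = 0 = Ext¹(s₂, s₂)`), the object `s₂[1]` admits no right
`⟨s₁⟩`-approximation, and consequently the right simple tilt of `H` at `s₁` is not a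
length heart. -/
theorem nilpotent_quiver_counterexample (k : Type*) [Field k] [Linear k C]
    [∀ x y : C, Module.Finite k (x ⟶ y)] [IsIdempotentComplete C]
    {X Y : Set C} (hXY : IsLengthHeart X Y) {s₁ s₂ : C}
    (hsimples : simplesOf (heart X Y) = isoClosure {s₁, s₂})
    (hne : ¬ Nonempty (s₁ ≅ s₂))
    (hhered : ∀ a b : C, a ∈ heart X Y → b ∈ heart X Y →
      ∀ n : ℤ, 2 ≤ n → ∀ f : a ⟶ (shiftFunctor C n).obj b, f = 0)
    (hEnd₁ : Module.finrank k (s₁ ⟶ s₁) = 1)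
    (hEnd₂ : Module.finrank k (s₂ ⟶ s₂) = 1)
    (hExt₁₁ : Module.finrank k (s₁ ⟶ (shiftFunctor C (1 : ℤ)).obj s₁) = 1)
    (hExt₁₂ : Module.finrank k (s₁ ⟶ (shiftFunctor C (1 : ℤ)).obj s₂) = 1)
    (hExt₂₁ : ∀ f : s₂ ⟶ (shiftFunctor C (1 : ℤ)).obj s₁, f = 0)
    (hExt₂₂ : ∀ f : s₂ ⟶ (shiftFunctor C (1 : ℤ)).obj s₂, f = 0) :
    ¬ HasRightApprox (extClosure {s₁}) ((shiftFunctor C (1 : ℤ)).obj s₂) ∧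
    ¬ HeartIsLength
        (star (rPerp {s₁} ∩ heart X Y) (shiftSet (extClosure {s₁}) (-1))) := by
  obtain ⟨hTS, _hbdd, hlen⟩ := hXY
  have hs1S : IsSimpleIn (heart X Y) s₁ := by
    have h : s₁ ∈ simplesOf (heart X Y) := by
      rw [hsimples]
      exact ⟨s₁, Set.mem_insert _ _, ⟨Iso.refl _⟩⟩
    exact h
  have hs2S : IsSimpleIn (heart X Y) s₂ := by
    have h : s₂ ∈ simplesOf (heart X Y) := by
      rw [hsimples]
      exact ⟨s₂, Set.mem_insert_iff.2 (Or.inr rfl), ⟨Iso.refl _⟩⟩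
    exact h
  have hs1H : s₁ ∈ heart X Y := hs1S.1
  have hs2H : s₂ ∈ heart X Y := hs2S.1
  have hnz1 : ¬ IsZero s₁ := hs1S.2.1
  have hnz2 : ¬ IsZero s₂ := hs2S.2.1
  have key : ∀ f : s₁ ⟶ s₂, f = 0 := hom_simple_simple_zero hTS hs1S hs2S hne
  have hsubE : extClosure ({s₁} : Set C) ⊆ heart X Y :=
    extClosure_sub_heart hTS
      (by intro s hs; rw [Set.mem_singleton_iff] at hs; subst hs; exact hs1H)
  constructor
  · -- Part 1: no right approximation of s₂[1] by ⟨s₁⟩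
    rintro ⟨x₀, f₀, hx₀E, happ⟩
    obtain ⟨t, ht⟩ := tower_exists k hTS hs1H hs2H hnz1 hhered hEnd₁ hExt₁₁ hExt₁₂ key
    have bound : ∀ x' : C, ExtClosureP ({s₁} : Set C) x' →
        ∃ N : ℕ, ∀ n : ℕ, Module.finrank k ((t n).1 ⟶ x') ≤ N := by
      intro x' hx'
      induction hx' with
      | of s hs =>
          rw [Set.mem_singleton_iff] at hs
          subst hs
          exact ⟨1, fun n => (ht n).2.1⟩
      | zero z hz =>
          refine ⟨0, fun n => ?_⟩
          rw [fr_zero_of_allzero k (fun f => hz.eq_of_tgt f 0)]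
      | iso a b e _ ih =>
          obtain ⟨N, hN⟩ := ih
          refine ⟨N, fun n => ?_⟩
          rw [← (homIso k _ e).finrank_eq]
          exact hN n
      | ext a d b f g w hT _ _ iha ihb =>
          obtain ⟨Na, hNa⟩ := iha
          obtain ⟨Nb, hNb⟩ := ihb
          refine ⟨Na + Nb, fun n => ?_⟩
          have hc12 : f ≫ g = 0 := comp_distTriang_mor_zero₁₂ _ hT
          have hE := fr_exact k (Linear.rightComp k ((t n).1) f)
            (Linear.rightComp k ((t n).1) g)
            (fun φ => show (φ ≫ f) ≫ g = 0 by rw [assoc, hc12, comp_zero])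
            (fun φ hφ => by
              obtain ⟨ψ, hψ⟩ := Triangle.coyoneda_exact₂ _ hT φ hφ
              exact ⟨ψ, hψ.symm⟩)
          have hr1 : Module.finrank k (LinearMap.range (Linear.rightComp k ((t n).1) f)) ≤ Na :=
            le_trans (LinearMap.finrank_range_le _) (hNa n)
          have hr2 : Module.finrank k (LinearMap.range (Linear.rightComp k ((t n).1) g)) ≤ Nb :=
            le_trans (Submodule.finrank_le _) (hNb n)
          omega
    obtain ⟨N, hN⟩ := bound x₀ hx₀E
    have hgrow : N + 1 ≤ Module.finrank k ((t N).1 ⟶ s₂⟦(1:ℤ)⟧) := (ht N).2.2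
    have hsurj : Function.Surjective (Linear.rightComp k ((t N).1) f₀ :
        ((t N).1 ⟶ x₀) →ₗ[k] ((t N).1 ⟶ s₂⟦(1:ℤ)⟧)) := by
      intro φ
      exact happ (ht N).1 φ
    have hle := fr_le_surj k _ hsurj
    have hNN := hN N
    omega
  · -- Part 2: the tilted heart is not a length heart
    intro hLen
    have hzeroF : ∀ z : C, IsZero z → z ∈ rPerp {s₁} ∩ heart X Y :=
      fun z hz => ⟨fun s _ f => hz.eq_of_tgt f 0, heart_zero hTS hz⟩
    have hzeroTm : ∀ z : C, IsZero z → z ∈ shiftSet (extClosure {s₁}) (-1) :=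
      fun z hz => ⟨z, ExtClosureP.zero z hz, ⟨((shiftFunctor C (-1:ℤ)).map_isZero hz).iso hz⟩⟩
    have hFH' : (rPerp {s₁} ∩ heart X Y) ⊆
        star (rPerp {s₁} ∩ heart X Y) (shiftSet (extClosure {s₁}) (-1)) := fun d hd =>
      ⟨d, 0, 𝟙 d, 0, 0, hd, hzeroTm 0 (isZero_zero C), contractible_distinguished d⟩
    have hTmH' : shiftSet (extClosure {s₁}) (-1) ⊆
        star (rPerp {s₁} ∩ heart X Y) (shiftSet (extClosure {s₁}) (-1)) := by
      intro d hd
      have hc := inv_rot_of_distTriang _ (contractible_distinguished d)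
      exact ⟨(0:C)⟦(-1:ℤ)⟧, d,
        (Triangle.mk (𝟙 d) (0 : d ⟶ 0) 0).invRotate.mor₁,
        (Triangle.mk (𝟙 d) (0 : d ⟶ 0) 0).invRotate.mor₂,
        (Triangle.mk (𝟙 d) (0 : d ⟶ 0) 0).invRotate.mor₃,
        hzeroF _ ((shiftFunctor C (-1:ℤ)).map_isZero (isZero_zero C)), hd, hc⟩
    have hs2F : s₂ ∈ rPerp {s₁} ∩ heart X Y := ⟨mem_rPerp_singleton key, hs2H⟩
    have hs2H' : s₂ ∈ star (rPerp {s₁} ∩ heart X Y) (shiftSet (extClosure {s₁}) (-1)) :=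
      hFH' hs2F
    have hs1Tm : s₁⟦(-1:ℤ)⟧ ∈ shiftSet (extClosure {s₁}) (-1) :=
      ⟨s₁, ExtClosureP.of s₁ rfl, ⟨Iso.refl _⟩⟩
    -- every simple of the tilted heart receives no nonzero map from s₂
    have key2 : ∀ u, u ∈ simplesOf
        (star (rPerp {s₁} ∩ heart X Y) (shiftSet (extClosure {s₁}) (-1))) →
        ∀ f : s₂ ⟶ u, f = 0 := by
      intro u hu
      obtain ⟨huH', hunz, husimp⟩ := hu
      obtain ⟨a, b, fa, gb, wc, haF, hbTm, hTu⟩ := huH'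
      rcases husimp a b fa gb wc (hFH' haF) (hTmH' hbTm) hTu with hza | hzb
      · -- u is isomorphic to an object of ⟨s₁⟩[-1]
        have hgiso : IsIso gb := (Triangle.isZero₁_iff_isIso₂ _ hTu).1 hza
        obtain ⟨t', ht'E, ⟨et⟩⟩ := hbTm
        have hvan : ∀ f : s₂ ⟶ b, f = 0 :=
          zhom_of_iso (Iso.refl s₂) et (hom_heart_neg hTS hs2H.1 (hsubE ht'E))
        intro f
        calc f = (f ≫ gb) ≫ inv gb := by simp
        _ = 0 := by rw [hvan (f ≫ gb), zero_comp]
      · -- u would be a simple object of the torsion-free class: impossible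
        exfalso
        have hfiso : IsIso fa := (Triangle.isZero₃_iff_isIso₁ _ hTu).1 hzb
        have huF : u ∈ rPerp {s₁} ∩ heart X Y := by
          refine ⟨mem_rPerp_singleton (fun f => ?_), heart_iso hTS (asIso fa) haF.2⟩
          calc f = (f ≫ inv fa) ≫ fa := by simp
          _ = 0 := by rw [haF.1 s₁ rfl (f ≫ inv fa), zero_comp]
        have hHom0 : ∀ φ : s₁ ⟶ u, φ = 0 := fun φ => huF.1 s₁ rfl φ
        have hulen : ExtClosureP (simplesOf (heart X Y)) u := hlen huF.2
        obtain ⟨hle, heqimp⟩ := chi k hTS hs1H hsimples hhered hEnd₁ hExt₁₁ hExt₁₂ key hulen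
        by_cases h0 : Module.finrank k (s₁ ⟶ u⟦(1:ℤ)⟧) = 0
        · have heq0 : Module.finrank k (s₁ ⟶ u) = 0 := fr_zero_of_allzero k hHom0
          rcases socle hTS hs1H hnz1 (heqimp (by rw [heq0, h0])) with hz | ⟨φ, hφ⟩
          · exact hunz hz
          · exact hφ (hHom0 φ)
        · obtain ⟨ξ, hξ⟩ := exists_ne_zero_of_fr_ne k h0
          have hμ0 : (ξ⟦(-1:ℤ)⟧' ≫ (sIsoA u).hom : s₁⟦(-1:ℤ)⟧ ⟶ u) ≠ 0 := by
            intro h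
            apply hξ
            apply (shiftFunctor C (-1:ℤ)).map_injective
            have hh : ξ⟦(-1:ℤ)⟧' = (ξ⟦(-1:ℤ)⟧' ≫ (sIsoA u).hom) ≫ (sIsoA u).inv := by
              rw [assoc, Iso.hom_inv_id, comp_id]
            rw [hh, h, zero_comp, Functor.map_zero]
          set μ : s₁⟦(-1:ℤ)⟧ ⟶ u := ξ⟦(-1:ℤ)⟧' ≫ (sIsoA u).hom with hμdef
          obtain ⟨Eo, eo, wo, hTE⟩ := distinguished_cocone_triangle μ
          have hEoH : Eo ∈ heart X Y :=
            heart_ext hTS _ (rot_of_distTriang _ hTE) huF.2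
              (heart_iso hTS (sIsoB s₁).symm hs1H)
          have hEoF : Eo ∈ rPerp {s₁} ∩ heart X Y := by
            refine ⟨mem_rPerp_singleton (fun φ => ?_), hEoH⟩
            obtain ⟨c, hc⟩ := hom_eq_smul_id k hEnd₁ hnz1 ((φ ≫ wo) ≫ (sIsoB s₁).hom)
            have hrec : (φ ≫ wo) = ((φ ≫ wo) ≫ (sIsoB s₁).hom) ≫ (sIsoB s₁).inv := by
              rw [assoc, Iso.hom_inv_id, comp_id]
            by_cases hc0 : c = 0
            · have hw0 : φ ≫ wo = 0 := by
                rw [hrec, hc, hc0, zero_smul, zero_comp]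
              obtain ⟨ψ, hψ⟩ := Triangle.coyoneda_exact₃ _ hTE φ hw0
              rw [hψ, hHom0 ψ]; exact zero_comp
            · exfalso
              have h31 : wo ≫ μ⟦(1:ℤ)⟧' = 0 := comp_distTriang_mor_zero₃₁ _ hTE
              have hid : φ ≫ wo = c • (sIsoB s₁).inv := by
                rw [hrec, hc, Linear.smul_comp, id_comp]
              have hzz : (φ ≫ wo) ≫ μ⟦(1:ℤ)⟧' = 0 := by rw [assoc, h31, comp_zero]
              rw [hid, Linear.smul_comp] at hzz
              have hz2 : (sIsoB s₁).inv ≫ μ⟦(1:ℤ)⟧' = 0 :=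
                (smul_eq_zero.1 hzz).resolve_left hc0
              have hμ1 : μ⟦(1:ℤ)⟧' = 0 := by
                rw [← id_comp (μ⟦(1:ℤ)⟧'), ← (sIsoB s₁).hom_inv_id, assoc, hz2, comp_zero]
              exact hμ0 ((shiftFunctor C (1:ℤ)).map_injective
                (by rw [hμ1, Functor.map_zero]))
          rcases husimp (s₁⟦(-1:ℤ)⟧) Eo μ eo wo (hTmH' hs1Tm) (hFH' hEoF) hTE with hz1 | hzE
          · exact hnz1 (((shiftFunctor C (1:ℤ)).map_isZero hz1).of_iso (sIsoB s₁).symm)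
          · have hμiso : IsIso μ := (Triangle.isZero₃_iff_isIso₁ _ hTE).1 hzE
            have hinv0 : inv μ = 0 := hom_heart_neg hTS huF.2.1 hs1H (inv μ)
            have hid0 : 𝟙 u = 0 := by rw [← IsIso.inv_hom_id μ, hinv0, zero_comp]
            exact hunz (isZero_of_id_zero hid0)
    -- conclude: s₂ would be filtered by the simples of the tilted heart
    have hext := hLen hs2H'
    have hinv : ∀ d, ExtClosureP (simplesOf
        (star (rPerp {s₁} ∩ heart X Y) (shiftSet (extClosure {s₁}) (-1)))) d →
        ∀ f : s₂ ⟶ d, f = 0 := by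
      intro d hd
      induction hd with
      | of s hs => exact key2 s hs
      | zero z hz => exact fun f => hz.eq_of_tgt f 0
      | iso a b e _ ih =>
          intro f
          calc f = (f ≫ e.inv) ≫ e.hom := by simp
          _ = 0 := by rw [ih (f ≫ e.inv), zero_comp]
      | ext a d' b fa gb wc hT _ _ iha ihb =>
          intro f
          obtain ⟨ψ, hψ⟩ := Triangle.coyoneda_exact₂ _ hT f (ihb (f ≫ gb))
          rw [hψ, iha ψ]; exact zero_comp
    exact hnz2 (isZero_of_id_zero (hinv s₂ hext (𝟙 s₂)))

end SMPaper
end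

section
/- Let D be a Hom-finite Krull–Schmidt triangulated category, S an orthogonal collection such that ⟨S⟩ is contravariantly finite in (S[1])^⊥ and covariantly finite in ^⊥(S[-1]), and such that either S is an S_{-1}-subcategory or Hom(S[1], S) = 0. If (A, B) is an S-mutation pair, then A = ∂⁻_S(B) (left mutation) and B = ∂_S(A) (right mutation). -/
open CategoryTheory Category Limits Pretriangulated

universe v u

namespace SMPaper

variable {C : Type u} [Category.{v} C] [Preadditive C] [HasZeroObject C] [HasShift C ℤ]
  [∀ n : ℤ, (shiftFunctor C n).Additive] [Pretriangulated C]

/-- A Serre functor, encoded via a trace map inducing a perfect pairing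
`Hom(x, y) × Hom(y, 𝕊x) → k`. -/
def IsSerreFunctor (k : Type*) [Field k] [Linear k C] (𝕊 : C ⥤ C) : Prop :=
  𝕊.IsEquivalence ∧ ∃ t : ∀ x : C, (x ⟶ 𝕊.obj x) →ₗ[k] k,
    (∀ ⦃x y : C⦄ (f : x ⟶ y), f ≠ 0 → ∃ g : y ⟶ 𝕊.obj x, t x (f ≫ g) ≠ 0) ∧
    (∀ ⦃x y : C⦄ (g : y ⟶ 𝕊.obj x), g ≠ 0 → ∃ f : x ⟶ y, t x (f ≫ g) ≠ 0)

/-- `S` is an `𝕊_{-1}`-subcategory: stable under `𝕊[1]` and its inverse. -/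
def IsSMinusOneStable (𝕊 : C ⥤ C) (S : Set C) : Prop :=
  (∀ s ∈ S, (shiftFunctor C (1 : ℤ)).obj (𝕊.obj s) ∈ S) ∧
  (∀ s ∈ S, ∃ u ∈ S, Nonempty ((shiftFunctor C (1 : ℤ)).obj (𝕊.obj u) ≅ s))

section Aux

variable {S : Set C}

lemma homZero_from_ext {a : C} (h : ∀ t ∈ S, ∀ f : a ⟶ t, f = 0) :
    ∀ {u : C}, ExtClosureP S u → ∀ f : a ⟶ u, f = 0 := by
  intro u hu
  induction hu with
  | of s hs => exact h s hs
  | zero z hz => exact fun f => hz.eq_of_tgt f 0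
  | iso x y e _ ih =>
      intro f
      have h0 : f ≫ e.inv = 0 := ih _
      calc f = (f ≫ e.inv) ≫ e.hom := by simp
        _ = 0 := by rw [h0, zero_comp]
  | ext p d q i j w hT _ _ ihp ihq =>
      intro f
      obtain ⟨g, hg⟩ := Triangle.coyoneda_exact₂ _ hT f (ihq _)
      rw [hg, ihp g]; exact zero_comp

lemma homZero_to_ext {m : C} (h : ∀ t ∈ S, ∀ f : t ⟶ m, f = 0) :
    ∀ {u : C}, ExtClosureP S u → ∀ f : u ⟶ m, f = 0 := by
  intro u hu
  induction hu with
  | of s hs => exact h s hs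
  | zero z hz => exact fun f => hz.eq_of_src f 0
  | iso x y e _ ih =>
      intro f
      have h0 : e.hom ≫ f = 0 := ih _
      calc f = e.inv ≫ e.hom ≫ f := by simp
        _ = 0 := by rw [h0, comp_zero]
  | ext p d q i j w hT _ _ ihp ihq =>
      intro f
      obtain ⟨g, hg⟩ := Triangle.yoneda_exact₂ _ hT f (ihp _)
      rw [hg, ihq g]; exact comp_zero

lemma homZero_to_ext_shift {m : C} (h : ∀ t ∈ S, ∀ f : t⟦(1:ℤ)⟧ ⟶ m, f = 0) :
    ∀ {u : C}, ExtClosureP S u → ∀ f : u⟦(1:ℤ)⟧ ⟶ m, f = 0 := by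
  intro u hu
  induction hu with
  | of s hs => exact h s hs
  | zero z hz =>
      intro f
      have hz1 : IsZero (z⟦(1:ℤ)⟧) := by
        rw [IsZero.iff_id_eq_zero] at hz ⊢
        calc 𝟙 (z⟦(1:ℤ)⟧) = (𝟙 z)⟦(1:ℤ)⟧' := ((shiftFunctor C (1:ℤ)).map_id z).symm
          _ = 0 := by rw [hz, CategoryTheory.Functor.map_zero]
      exact hz1.eq_of_src f 0
  | iso x y e _ ih =>
      intro f
      have h0 : e.hom⟦(1:ℤ)⟧' ≫ f = 0 := ih _
      calc f = e.inv⟦(1:ℤ)⟧' ≫ e.hom⟦(1:ℤ)⟧' ≫ f := by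
              rw [← assoc, ← CategoryTheory.Functor.map_comp, e.inv_hom_id, CategoryTheory.Functor.map_id, id_comp]
        _ = 0 := by rw [h0, comp_zero]
  | ext p d q i j w hT _ _ ihp ihq =>
      intro f
      have hT3 := rot_of_distTriang _ (rot_of_distTriang _ (rot_of_distTriang _ hT))
      obtain ⟨g, hg⟩ := Triangle.yoneda_exact₂ _ hT3 f
        (show (-(i⟦(1:ℤ)⟧')) ≫ f = 0 by
          rw [Preadditive.neg_comp, ihp (i⟦(1:ℤ)⟧' ≫ f), neg_zero])
      rw [hg, ihq g]; exact comp_zero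

lemma shift_hom_zero_of_neg {a t : C} (h : ∀ f : a ⟶ t⟦(-1:ℤ)⟧, f = 0)
    (φ : a⟦(1:ℤ)⟧ ⟶ t) : φ = 0 := by
  have h0 : (shiftFunctor C (-1:ℤ)).map φ = 0 := by
    rw [← cancel_epi ((shiftFunctorCompIsoId C (1:ℤ) (-1) (by norm_num)).inv.app a), comp_zero]
    exact h _
  exact (shiftFunctor C (-1:ℤ)).map_injective (by rw [h0, Functor.map_zero])

lemma hom_to_negshift_zero {s c : C} (h : ∀ f : s⟦(1:ℤ)⟧ ⟶ c, f = 0)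
    (δ : s ⟶ c⟦(-1:ℤ)⟧) : δ = 0 := by
  have h0 : (shiftFunctor C (1:ℤ)).map δ = 0 := by
    rw [← cancel_mono ((shiftFunctorCompIsoId C (-1:ℤ) (1) (by norm_num)).hom.app c), zero_comp]
    exact h _
  exact (shiftFunctor C (1:ℤ)).map_injective (by rw [h0, Functor.map_zero])

lemma distTriang_iso₁ {T : Triangle C} (hT : T ∈ distTriang C) {a : C} (e : T.obj₁ ≅ a) :
    Triangle.mk (e.inv ≫ T.mor₁) T.mor₂ (T.mor₃ ≫ e.hom⟦(1:ℤ)⟧') ∈ distTriang C := by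
  refine isomorphic_distinguished _ hT _ ?_
  refine Triangle.isoMk _ _ e.symm (Iso.refl _) (Iso.refl _) ?_ ?_ ?_
  · dsimp [Triangle.mk]; simp
  · dsimp [Triangle.mk]; simp
  · dsimp [Triangle.mk]
    rw [assoc, ← CategoryTheory.Functor.map_comp, e.hom_inv_id, CategoryTheory.Functor.map_id, comp_id, id_comp]

lemma distTriang_iso₂ {T : Triangle C} (hT : T ∈ distTriang C) {a : C} (e : T.obj₂ ≅ a) :
    Triangle.mk (T.mor₁ ≫ e.hom) (e.inv ≫ T.mor₂) T.mor₃ ∈ distTriang C := by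
  refine isomorphic_distinguished _ hT _ ?_
  refine Triangle.isoMk _ _ (Iso.refl _) e.symm (Iso.refl _) ?_ ?_ ?_
  · dsimp [Triangle.mk]; simp
  · dsimp [Triangle.mk]; simp
  · dsimp [Triangle.mk]; simp

lemma distTriang_iso₃ {T : Triangle C} (hT : T ∈ distTriang C) {a : C} (e : T.obj₃ ≅ a) :
    Triangle.mk T.mor₁ (T.mor₂ ≫ e.hom) (e.inv ≫ T.mor₃) ∈ distTriang C := by
  refine isomorphic_distinguished _ hT _ ?_
  refine Triangle.isoMk _ _ (Iso.refl _) (Iso.refl _) e.symm ?_ ?_ ?_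
  · dsimp [Triangle.mk]; simp
  · dsimp [Triangle.mk]; simp
  · dsimp [Triangle.mk]; simp

lemma rightApprox_of_triangle {s y c : C} {f : s ⟶ y} {g : y ⟶ c} {h : c ⟶ s⟦(1:ℤ)⟧}
    (hT : Triangle.mk f g h ∈ distTriang C) (hs : s ∈ extClosure S)
    (hc0 : ∀ t ∈ S, ∀ φ : t ⟶ c, φ = 0)
    (hc1 : ∀ t ∈ S, ∀ φ : t⟦(1:ℤ)⟧ ⟶ c, φ = 0) :
    IsRightApprox (extClosure S) f ∧ RightMinimal f := by
  constructor
  · refine ⟨hs, fun s' hs' g' => ?_⟩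
    obtain ⟨ψ, hψ⟩ := Triangle.coyoneda_exact₂ _ hT g' (homZero_to_ext hc0 hs' _)
    exact ⟨ψ, hψ.symm⟩
  · intro β hβ
    have h1 : (β - 𝟙 s) ≫ f = 0 := by rw [Preadditive.sub_comp, id_comp, hβ, sub_self]
    obtain ⟨δ, hδ⟩ := Triangle.coyoneda_exact₂ _ (inv_rot_of_distTriang _ hT) (β - 𝟙 s) h1
    have hδ0 : δ = 0 := hom_to_negshift_zero (fun φ => homZero_to_ext_shift hc1 hs φ) δ
    rw [hδ0, zero_comp] at hδ; replace hδ := sub_eq_zero.mp hδ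
    rw [hδ]
    infer_instance

lemma leftApprox_of_triangle {c y s : C} {g : c ⟶ y} {f : y ⟶ s} {h : s ⟶ c⟦(1:ℤ)⟧}
    (hT : Triangle.mk g f h ∈ distTriang C) (hs : s ∈ extClosure S)
    (hc0 : ∀ t ∈ S, ∀ φ : c ⟶ t, φ = 0)
    (hc1 : ∀ t ∈ S, ∀ φ : c⟦(1:ℤ)⟧ ⟶ t, φ = 0) :
    IsLeftApprox (extClosure S) f ∧ LeftMinimal f := by
  constructor
  · refine ⟨hs, fun s' hs' g' => ?_⟩
    obtain ⟨ψ, hψ⟩ := Triangle.yoneda_exact₂ _ hT g' (homZero_from_ext hc0 hs' _)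
    exact ⟨ψ, hψ.symm⟩
  · intro β hβ
    have h1 : f ≫ (β - 𝟙 s) = 0 := by rw [Preadditive.comp_sub, comp_id, hβ, sub_self]
    obtain ⟨δ, hδ⟩ := Triangle.yoneda_exact₂ _ (rot_of_distTriang _ hT) (β - 𝟙 s) h1
    have hδ0 : δ = 0 := homZero_from_ext hc1 hs δ
    rw [hδ0, comp_zero] at hδ; replace hδ := sub_eq_zero.mp hδ
    rw [hδ]
    infer_instance

lemma isIso_of_comp_isIso {s s' : C} (u : s ⟶ s') (v : s' ⟶ s)
    (h1 : IsIso (u ≫ v)) (h2 : IsIso (v ≫ u)) : IsIso u := by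
  have hru : u ≫ (v ≫ inv (u ≫ v)) = 𝟙 s := by rw [← assoc, IsIso.hom_inv_id]
  have hlu : (inv (v ≫ u) ≫ v) ≫ u = 𝟙 s' := by rw [assoc, IsIso.inv_hom_id]
  have hrl : v ≫ inv (u ≫ v) = inv (v ≫ u) ≫ v := by
    calc v ≫ inv (u ≫ v) = ((inv (v ≫ u) ≫ v) ≫ u) ≫ (v ≫ inv (u ≫ v)) := by
          rw [hlu, id_comp]
      _ = (inv (v ≫ u) ≫ v) ≫ (u ≫ (v ≫ inv (u ≫ v))) := by simp only [assoc]
      _ = inv (v ≫ u) ≫ v := by rw [hru, comp_id]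
  exact ⟨⟨v ≫ inv (u ≫ v), hru, by rw [hrl]; exact hlu⟩⟩

lemma iso_of_min_right {W : Set C} {s s' y : C} {f : s ⟶ y} {f' : s' ⟶ y}
    (h1 : IsRightApprox W f) (m1 : RightMinimal f)
    (h2 : IsRightApprox W f') (m2 : RightMinimal f') :
    ∃ φ : s ⟶ s', IsIso φ ∧ φ ≫ f' = f := by
  obtain ⟨u, hu⟩ := h2.2 h1.1 f
  obtain ⟨v, hv⟩ := h1.2 h2.1 f'
  have hi1 : IsIso (u ≫ v) := m1 _ (by rw [assoc, hv, hu])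
  have hi2 : IsIso (v ≫ u) := m2 _ (by rw [assoc, hu, hv])
  exact ⟨u, isIso_of_comp_isIso u v hi1 hi2, hu⟩

lemma iso_of_min_left {W : Set C} {y s s' : C} {f : y ⟶ s} {f' : y ⟶ s'}
    (h1 : IsLeftApprox W f) (m1 : LeftMinimal f)
    (h2 : IsLeftApprox W f') (m2 : LeftMinimal f') :
    ∃ φ : s ⟶ s', IsIso φ ∧ f ≫ φ = f' := by
  obtain ⟨u, hu⟩ := h1.2 h2.1 f'
  obtain ⟨v, hv⟩ := h2.2 h1.1 f
  have hi1 : IsIso (u ≫ v) := m1 _ (by rw [← assoc, hu, hv])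
  have hi2 : IsIso (v ≫ u) := m2 _ (by rw [← assoc, hv, hu])
  exact ⟨u, isIso_of_comp_isIso u v hi1 hi2, hu⟩

lemma not_mem_of_lPerp (hS : IsOrthogonal S) {a : C} (hL : a ∈ lPerp S) : a ∉ S := by
  intro haS
  exact hS.nonzero a haS ((IsZero.iff_id_eq_zero a).2 (hL a haS (𝟙 a)))

end Aux

/-- if `(A, B)` is an `S`-mutation pair, then `A = ∂⁻_S(B)` and
`B = ∂_S(A)`. -/
theorem mutation_pair_gives_mutations (k : Type*) [Field k] [Linear k C]
    [∀ x y : C, Module.Finite k (x ⟶ y)] [IsIdempotentComplete C]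
    {S : Set C} (hS : IsOrthogonal S)
    (hcontra : ContravariantlyFiniteIn (extClosure S) (rPerp (shiftSet S 1)))
    (hco : CovariantlyFiniteIn (extClosure S) (lPerp (shiftSet S (-1))))
    (hcase : (∃ 𝕊 : C ⥤ C, IsSerreFunctor k 𝕊 ∧ IsSMinusOneStable 𝕊 S) ∨
      homOrth (shiftSet S 1) S)
    {A B : Set C} (hAB : IsSMutationPair S A B) :
    isoClosure A = leftMutationSet S B ∧ isoClosure B = rightMutationSet S A := by
  obtain ⟨hA, hB⟩ := hAB
  have memA : ∀ {a : C}, a ∈ A → a ∈ lPerp S ∩ rPerp S ∩ lPerp (shiftSet S (-1)) ∩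
      shiftSet (star (extClosure S) B) (-1) := by
    intro a ha
    rw [← hA]
    exact ⟨a, ha, ⟨Iso.refl a⟩⟩
  have memB : ∀ {b : C}, b ∈ B → b ∈ lPerp S ∩ rPerp S ∩ rPerp (shiftSet S 1) ∩
      shiftSet (star A (extClosure S)) 1 := by
    intro b hb
    rw [← hB]
    exact ⟨b, hb, ⟨Iso.refl b⟩⟩
  have dir1a : isoClosure A ⊆ leftMutationSet S B := by
    intro a hm
    rw [hA] at hm
    obtain ⟨⟨⟨haL, haR⟩, haLn⟩, x, ⟨s', b, u, v, w, hs', hb, hTx⟩, ⟨e⟩⟩ := hm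
    -- triangle s' →u x →v b →w s'⟦1⟧, e : x⟦-1⟧ ≅ a
    have hI := inv_rot_of_distTriang _ (inv_rot_of_distTriang _ hTx)
    have hT2 := distTriang_iso₁ hI e
    obtain ⟨happ, hmin⟩ := leftApprox_of_triangle hT2 hs'
      (fun t ht φ => haL t ht φ)
      (fun t ht φ => shift_hom_zero_of_neg (fun ψ => haLn _ ⟨t, ht, ⟨Iso.refl _⟩⟩ ψ) φ)
    obtain ⟨⟨⟨hbL, _⟩, _⟩, _⟩ := memB hb
    exact ⟨b, hb, Or.inr ⟨not_mem_of_lPerp hS hbL, s', _, _, _, happ, hmin, hT2⟩⟩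
  have dir1b : leftMutationSet S B ⊆ isoClosure A := by
    rintro m ⟨b, hb, hmut⟩
    obtain ⟨⟨⟨hbL, hbR⟩, hbR1⟩, x, ⟨a', s', u, v, w, ha', hs', hTx⟩, ⟨e⟩⟩ := memB hb
    -- triangle a' →u x →v s' →w a'⟦1⟧ ; e : x⟦1⟧ ≅ b
    rcases hmut with ⟨hbS, _⟩ | ⟨-, s, g, f, h, happ, hmin, hT⟩
    · exact absurd hbS (not_mem_of_lPerp hS hbL)
    obtain ⟨⟨⟨haL, haR⟩, haLn⟩, -⟩ := memA ha'
    have e' : x ≅ (shiftFunctor C (-1:ℤ)).obj b :=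
      (shiftEquiv C (1:ℤ)).unitIso.app x ≪≫ (shiftFunctor C (-1:ℤ)).mapIso e
    have hT2 : Triangle.mk (u ≫ e'.hom) (e'.inv ≫ v) w ∈ distTriang C :=
      distTriang_iso₂ hTx e'
    obtain ⟨happ', hmin'⟩ := leftApprox_of_triangle hT2 hs'
      (fun t ht φ => haL t ht φ)
      (fun t ht φ => shift_hom_zero_of_neg (fun ψ => haLn _ ⟨t, ht, ⟨Iso.refl _⟩⟩ ψ) φ)
    obtain ⟨φ, hφiso, hφ⟩ := iso_of_min_left happ hmin happ' hmin'
    obtain ⟨amor, hcm1, hcm2⟩ := complete_distinguished_triangle_morphism₁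
      (Triangle.mk g f h) (Triangle.mk (u ≫ e'.hom) (e'.inv ≫ v) w) hT hT2
      (𝟙 _) φ (by dsimp [Triangle.mk]; rw [id_comp, hφ])
    have : IsIso amor := by
      have := isIso₁_of_isIso₂₃
        (Triangle.homMk (Triangle.mk g f h) (Triangle.mk (u ≫ e'.hom) (e'.inv ≫ v) w)
          amor (𝟙 _) φ hcm1 (by dsimp [Triangle.mk]; rw [id_comp, hφ]) hcm2) hT hT2
        (by dsimp [Triangle.mk]; exact IsIso.id _) hφiso
      exact this
    exact ⟨a', ha', ⟨(asIso amor).symm⟩⟩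
  have dir2a : isoClosure B ⊆ rightMutationSet S A := by
    intro m hm
    rw [hB] at hm
    obtain ⟨⟨⟨hmL, hmR⟩, hmR1⟩, x, ⟨a, s, u, v, w, ha, hs, hTx⟩, ⟨e⟩⟩ := hm
    -- triangle a →u x →v s →w a⟦1⟧ ; e : x⟦1⟧ ≅ m
    have hrr := rot_of_distTriang _ (rot_of_distTriang _ hTx)
    have hT2 := distTriang_iso₃ hrr e
    obtain ⟨happ, hmin⟩ := rightApprox_of_triangle hT2 hs
      (fun t ht φ => hmR t ht φ)
      (fun t ht φ => hmR1 _ ⟨t, ht, ⟨Iso.refl _⟩⟩ φ)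
    obtain ⟨⟨⟨haL, _⟩, _⟩, _⟩ := memA ha
    exact ⟨a, ha, Or.inr ⟨not_mem_of_lPerp hS haL, s, _, _, _, happ, hmin, hT2⟩⟩
  have dir2b : rightMutationSet S A ⊆ isoClosure B := by
    rintro m ⟨a, ha, hmut⟩
    obtain ⟨⟨⟨haL, haR⟩, haLn⟩, x, ⟨s', b, u, v, w, hs', hb, hTx⟩, ⟨e⟩⟩ := memA ha
    -- triangle s' →u x →v b →w s'⟦1⟧ ; e : x⟦-1⟧ ≅ a
    rcases hmut with ⟨haS, _⟩ | ⟨-, s, f, g, h, happ, hmin, hT⟩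
    · exact absurd haS (not_mem_of_lPerp hS haL)
    obtain ⟨⟨⟨hbL, hbR⟩, hbR1⟩, -⟩ := memB hb
    have e' : x ≅ (shiftFunctor C (1:ℤ)).obj a :=
      ((shiftEquiv C (1:ℤ)).counitIso.app x).symm ≪≫ (shiftFunctor C (1:ℤ)).mapIso e
    have hT2 : Triangle.mk (u ≫ e'.hom) (e'.inv ≫ v) w ∈ distTriang C :=
      distTriang_iso₂ hTx e'
    obtain ⟨happ', hmin'⟩ := rightApprox_of_triangle hT2 hs'
      (fun t ht φ => hbR t ht φ)
      (fun t ht φ => hbR1 _ ⟨t, ht, ⟨Iso.refl _⟩⟩ φ)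
    obtain ⟨φ, hφiso, hφ⟩ := iso_of_min_right happ hmin happ' hmin'
    obtain ⟨cmor, hcm1, hcm2⟩ := complete_distinguished_triangle_morphism
      (Triangle.mk f g h) (Triangle.mk (u ≫ e'.hom) (e'.inv ≫ v) w) hT hT2
      φ (𝟙 _) (by dsimp [Triangle.mk]; rw [comp_id, hφ])
    have : IsIso cmor := by
      have := isIso₃_of_isIso₁₂
        (Triangle.homMk (Triangle.mk f g h) (Triangle.mk (u ≫ e'.hom) (e'.inv ≫ v) w)
          φ (𝟙 _) cmor (by dsimp [Triangle.mk]; rw [comp_id, hφ]) hcm1 hcm2) hT hT2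
        hφiso (by dsimp [Triangle.mk]; exact IsIso.id _)
      exact this
    exact ⟨b, hb, ⟨(asIso cmor).symm⟩⟩
  exact ⟨Set.Subset.antisymm dir1a dir1b, Set.Subset.antisymm dir2a dir2b⟩
end SMPaper
end

section
/- Let (X, Y) be a t-structure on a triangulated category D with heart H, and let (T, F) be a torsion pair in H. If (X, Y) admits a right adjacent co-t-structure (i.e. Y is contravariantly finite in D) and F is contravariantly finite in H, then the right HRS-tilted t-structure (X * T[-1], (F * Y)[-1]) also admits a right adjacent co-t-structure, i.e. F * Y is contravariantly finite in D. -/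
open CategoryTheory Category Limits Pretriangulated

universe v u

namespace SMPaper

variable {C : Type u} [Category.{v} C] [Preadditive C] [HasZeroObject C] [HasShift C ℤ]
  [∀ n : ℤ, (shiftFunctor C n).Additive] [Pretriangulated C]

lemma shift_mem_X {X Y : Set C} (hXY : IsTStructure X Y) {x : C} (hx : x ∈ X) :
    (shiftFunctor C (1:ℤ)).obj x ∈ X := hXY.shift ⟨x, hx, ⟨Iso.refl _⟩⟩

/-- If every map from `X` to `z` vanishes, then `z ∈ Y`. -/
lemma Y_detect {X Y : Set C} (hXY : IsTStructure X Y) {z : C}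
    (h : ∀ x ∈ X, ∀ ψ : x ⟶ z, ψ = 0) : z ∈ Y := by
  obtain ⟨x₃, y₃, u₃, v₃, w₃, hx₃, hy₃, hT₃⟩ := hXY.gen z
  have hu₃ : u₃ = 0 := h x₃ hx₃ u₃
  have hR := rot_of_distTriang _ hT₃
  obtain ⟨k, hk⟩ := Triangle.coyoneda_exact₃ _ hR (𝟙 ((shiftFunctor C (1:ℤ)).obj x₃))
    (by dsimp [Triangle.rotate]; rw [hu₃]; exact (by simp : 𝟙 ((shiftFunctor C (1:ℤ)).obj x₃) ≫ (-(shiftFunctor C (1:ℤ)).map (0 : x₃ ⟶ z)) = 0))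
  have hk' : 𝟙 ((shiftFunctor C (1:ℤ)).obj x₃) = k ≫ w₃ := hk
  have hk0 : k = 0 := hXY.hom (shift_mem_X hXY hx₃) hy₃ k
  have hone : (𝟙 ((shiftFunctor C (1:ℤ)).obj x₃)) = 0 := by rw [hk', hk0]; exact zero_comp
  have hw₃ : w₃ = 0 := by
    calc w₃ = w₃ ≫ 𝟙 _ := (comp_id w₃).symm
    _ = w₃ ≫ 0 := by rw [hone]
    _ = 0 := comp_zero
  obtain ⟨r₀, hr₀⟩ := Triangle.coyoneda_exact₃ _ hT₃ (𝟙 y₃) (by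
    show 𝟙 y₃ ≫ w₃ = 0
    rw [hw₃, comp_zero])
  have hr : 𝟙 y₃ = r₀ ≫ v₃ := hr₀
  set r : y₃ ⟶ z := r₀ with hrdef
  have hrv : r ≫ v₃ = 𝟙 y₃ := hr.symm
  have hvr : v₃ ≫ r = 𝟙 z := by
    obtain ⟨s₀, hs₀⟩ := Triangle.coyoneda_exact₂ _ hT₃ (v₃ ≫ r - 𝟙 z)
      (by
        show (v₃ ≫ r - 𝟙 z) ≫ v₃ = 0
        rw [Preadditive.sub_comp, assoc, hrv, comp_id, id_comp, sub_self])
    have hs' : v₃ ≫ r - 𝟙 z = s₀ ≫ u₃ := hs₀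
    rw [hu₃] at hs'
    exact sub_eq_zero.mp (hs'.trans comp_zero)
  exact hXY.isoY (⟨r, v₃, hrv, hvr⟩ : y₃ ≅ z) hy₃

lemma mem_shiftY {X Y : Set C} (hXY : IsTStructure X Y) {z : C}
    (h : ∀ x ∈ X, ∀ ψ : x ⟶ z⟦(-1:ℤ)⟧, ψ = 0) : z ∈ shiftSet Y 1 :=
  ⟨_, Y_detect hXY h, ⟨shiftNegShift z (1:ℤ)⟩⟩

/-- Any object admits a map from a heart object catching all maps from the heart. -/
lemma heart_catcher {X Y : Set C} (hXY : IsTStructure X Y)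
    (hY : ContravariantlyFiniteIn Y Set.univ) (d : C) :
    ∃ (h : C), h ∈ heart X Y ∧ ∃ μ : h ⟶ d,
      ∀ f' ∈ heart X Y, ∀ a : f' ⟶ d, ∃ b : f' ⟶ h, b ≫ μ = a := by
  obtain ⟨y₁, g₁, hy₁, happ₁⟩ := hY (d⟦(-1:ℤ)⟧) trivial
  set S₁ := shiftFunctor C (1:ℤ) with hS₁
  set m : y₁⟦(1:ℤ)⟧ ⟶ d := S₁.map g₁ ≫ (shiftNegShift d (1:ℤ)).hom with hm
  obtain ⟨x₂, y₂, u₂, v₂, w₂, hx₂, hy₂, hT₂⟩ := hXY.gen (y₁⟦(1:ℤ)⟧)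
  -- x₂ is in the heart
  have hx₂Y1 : x₂ ∈ shiftSet Y 1 := by
    apply mem_shiftY hXY
    intro x hx ψ
    set Ψ : x⟦(1:ℤ)⟧ ⟶ x₂ := S₁.map ψ ≫ (shiftNegShift x₂ (1:ℤ)).hom with hΨ
    have hΨu : Ψ ≫ u₂ = 0 := by
      have : Ψ ≫ u₂ = S₁.map (S₁.preimage (Ψ ≫ u₂)) := (S₁.map_preimage _).symm
      rw [this, hXY.hom hx hy₁ (S₁.preimage (Ψ ≫ u₂)), Functor.map_zero]
    have hT₂' := inv_rot_of_distTriang _ hT₂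
    obtain ⟨s, hs⟩ := Triangle.coyoneda_exact₂ _ hT₂' Ψ (by
      show Ψ ≫ u₂ = 0
      exact hΨu)
    have hs0 : s = 0 := by
      apply S₁.map_injective
      rw [Functor.map_zero]
      have : S₁.map s = (S₁.map s ≫ (shiftNegShift y₂ (1:ℤ)).hom) ≫ (shiftNegShift y₂ (1:ℤ)).inv :=
        ((assoc _ _ _).trans ((congrArg (S₁.map s ≫ ·) (Iso.hom_inv_id _)).trans (comp_id _))).symm
      rw [this, hXY.hom (shift_mem_X hXY (shift_mem_X hXY hx)) hy₂
        (S₁.map s ≫ (shiftNegShift y₂ (1:ℤ)).hom)]; exact zero_comp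
    have hΨ0 : Ψ = 0 := by rw [hs, hs0]; exact zero_comp
    have : S₁.map ψ = 0 := by
      have := hΨ0
      rw [hΨ] at this
      calc S₁.map ψ = (S₁.map ψ ≫ (shiftNegShift x₂ (1:ℤ)).hom) ≫ (shiftNegShift x₂ (1:ℤ)).inv :=
            ((assoc _ _ _).trans ((congrArg (S₁.map ψ ≫ ·) (Iso.hom_inv_id _)).trans (comp_id _))).symm
      _ = 0 := by rw [this, zero_comp]
    exact S₁.map_injective (by rw [this, Functor.map_zero])
  refine ⟨x₂, ⟨hx₂, hx₂Y1⟩, u₂ ≫ m, ?_⟩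
  rintro f' ⟨hf'X, yy, hyy, ⟨ι⟩⟩ a
  -- deshift a
  set t : yy ⟶ d⟦(-1:ℤ)⟧ := S₁.preimage (ι.hom ≫ a ≫ (shiftNegShift d (1:ℤ)).inv) with ht
  have hmapt : S₁.map t = ι.hom ≫ a ≫ (shiftNegShift d (1:ℤ)).inv := S₁.map_preimage _
  obtain ⟨ς, hς⟩ := happ₁ hyy t
  set c' : f' ⟶ y₁⟦(1:ℤ)⟧ := ι.inv ≫ S₁.map ς with hc'
  have hc'm : c' ≫ m = a := by
    rw [hc', hm, assoc, ← assoc (S₁.map ς), ← Functor.map_comp, hς, hmapt]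
    simp only [assoc, Iso.inv_hom_id, comp_id, Iso.inv_hom_id_assoc]
  obtain ⟨b, hb⟩ := Triangle.coyoneda_exact₂ _ hT₂ c' (by
    show c' ≫ v₂ = 0
    exact hXY.hom hf'X hy₂ (c' ≫ v₂))
  have hb' : c' = b ≫ u₂ := hb
  exact ⟨b, (assoc _ _ _).symm.trans ((congrArg (· ≫ m) hb'.symm).trans hc'm)⟩

/-- Weak right F-approximations exist. -/
lemma F_catcher {X Y T F : Set C} (hXY : IsTStructure X Y)
    (hTF : IsTorsionPairIn (heart X Y) T F)
    (hY : ContravariantlyFiniteIn Y Set.univ)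
    (hF : ContravariantlyFiniteIn F (heart X Y)) (d : C) :
    ∃ (f : C), f ∈ F ∧ ∃ φ : f ⟶ d,
      ∀ f' ∈ F, ∀ a : f' ⟶ d, ∃ θ : f' ⟶ f, θ ≫ φ = a := by
  obtain ⟨h, hh, μ, hcatch⟩ := heart_catcher hXY hY d
  obtain ⟨f, ρ, hfF, hρ⟩ := hF h hh
  refine ⟨f, hfF, ρ ≫ μ, ?_⟩
  intro f' hf' a
  obtain ⟨b, hb⟩ := hcatch f' (hTF.subF hf') a
  obtain ⟨θ, hθ⟩ := hρ hf' b
  exact ⟨θ, by rw [← assoc, hθ, hb]⟩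

/-- if `(X, Y)` admits a right adjacent co-t-structure (`Y` is
contravariantly finite in `D`) and the torsionfree class `F` is contravariantly finite
in the heart `H`, then the right HRS tilt also admits a right adjacent co-t-structure,
i.e. `F * Y` is contravariantly finite in `D`. -/
theorem tilt_preserves_right_adjacent {X Y T F : Set C} (hXY : IsTStructure X Y)
    (hTF : IsTorsionPairIn (heart X Y) T F)
    (hY : ContravariantlyFiniteIn Y Set.univ)
    (hF : ContravariantlyFiniteIn F (heart X Y)) :
    ContravariantlyFiniteIn (star F Y) Set.univ := by
  intro d _
  obtain ⟨f, hfF, φ, hφ⟩ := F_catcher hXY hTF hY hF d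
  obtain ⟨w, π, pd, hTd⟩ := distinguished_cocone_triangle φ
  obtain ⟨yw, gw, hywY, hgw⟩ := hY w trivial
  obtain ⟨e, κ, p, hTe⟩ := distinguished_cocone_triangle₂ (gw ≫ pd)
  have hA := rot_of_distTriang _ (rot_of_distTriang _ hTe)
  have hB := rot_of_distTriang _ (rot_of_distTriang _ hTd)
  obtain ⟨c₀, hc₁, hc₂⟩ := complete_distinguished_triangle_morphism
    (Triangle.mk κ p (gw ≫ pd)).rotate.rotate (Triangle.mk φ π pd).rotate.rotate hA hB
    gw (𝟙 ((shiftFunctor C (1:ℤ)).obj f)) (by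
      show (gw ≫ pd) ≫ 𝟙 _ = gw ≫ pd
      rw [comp_id])
  obtain ⟨c, hc₁', hc₂'⟩ :
      ∃ c : (shiftFunctor C (1:ℤ)).obj e ⟶ (shiftFunctor C (1:ℤ)).obj d,
        ((-((shiftFunctor C (1:ℤ)).map κ)) ≫ c
            = 𝟙 ((shiftFunctor C (1:ℤ)).obj f) ≫ (-((shiftFunctor C (1:ℤ)).map φ))) ∧
        ((-((shiftFunctor C (1:ℤ)).map p)) ≫ (shiftFunctor C (1:ℤ)).map gw
            = c ≫ (-((shiftFunctor C (1:ℤ)).map π))) := ⟨c₀, hc₁, hc₂⟩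
  obtain ⟨ε, hmapε⟩ : ∃ ε : e ⟶ d, (shiftFunctor C (1:ℤ)).map ε = c :=
    ⟨(shiftFunctor C (1:ℤ)).preimage c, (shiftFunctor C (1:ℤ)).map_preimage c⟩
  have hκε : κ ≫ ε = φ := by
    apply (shiftFunctor C (1:ℤ)).map_injective
    rw [Functor.map_comp, hmapε]
    rw [Preadditive.neg_comp, id_comp] at hc₁'
    exact neg_inj.mp hc₁'
  have hεπ : ε ≫ π = p ≫ gw := by
    apply (shiftFunctor C (1:ℤ)).map_injective
    rw [Functor.map_comp, Functor.map_comp, hmapε]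
    rw [Preadditive.neg_comp, Preadditive.comp_neg] at hc₂'
    exact (neg_inj.mp hc₂').symm
  -- approximation property for maps from Y
  have hAY : ∀ y'' ∈ Y, ∀ γ : y'' ⟶ d, ∃ β : y'' ⟶ e, β ≫ ε = γ := by
    intro y'' hy'' γ
    obtain ⟨ς, hς⟩ := hgw hy'' (γ ≫ π)
    obtain ⟨β₀₀, hβ₀₀⟩ := Triangle.coyoneda_exact₃ _ hTe ς (by
      show ς ≫ gw ≫ pd = 0
      have hππd : π ≫ pd = 0 := comp_distTriang_mor_zero₂₃ _ hTd
      rw [← assoc, hς, assoc, hππd, comp_zero])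
    obtain ⟨β₀, hβ₀⟩ : ∃ b : y'' ⟶ e, ς = b ≫ p := ⟨β₀₀, hβ₀₀⟩
    obtain ⟨ξ₀, hξ₀⟩ := Triangle.coyoneda_exact₂ _ hTd (γ - β₀ ≫ ε) (by
      show (γ - β₀ ≫ ε) ≫ π = 0
      rw [Preadditive.sub_comp, assoc, hεπ, ← assoc, ← hβ₀, hς, sub_self])
    obtain ⟨ξ, hξ⟩ : ∃ x : y'' ⟶ f, γ - β₀ ≫ ε = x ≫ φ := ⟨ξ₀, hξ₀⟩
    refine ⟨β₀ + ξ ≫ κ, ?_⟩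
    rw [Preadditive.add_comp, assoc, hκε, ← hξ]
    abel
  refine ⟨e, ε, ⟨f, yw, κ, p, gw ≫ pd, hfF, hywY, hTe⟩, ?_⟩
  rintro e' ⟨f', y', i', p', w', hf'F, hy'Y, hT'⟩ α
  obtain ⟨θ, hθ⟩ := hφ f' hf'F (i' ≫ α)
  have hT'' := inv_rot_of_distTriang _ hT'
  have hTd'' := inv_rot_of_distTriang _ hTd
  have hTe'' := inv_rot_of_distTriang _ hTe
  have hδi' : (Triangle.mk i' p' w').invRotate.mor₁ ≫ i' = 0 :=
    comp_distTriang_mor_zero₁₂ _ hT''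
  have hρφ : ((Triangle.mk i' p' w').invRotate.mor₁ ≫ θ) ≫ φ = 0 := by
    erw [assoc, hθ, ← assoc, hδi', zero_comp]
  obtain ⟨ϱ₀, hϱ₀⟩ := Triangle.coyoneda_exact₂ _ hTd''
    ((Triangle.mk i' p' w').invRotate.mor₁ ≫ θ) hρφ
  obtain ⟨ϱ, hϱ⟩ : ∃ r : (shiftFunctor C (-1:ℤ)).obj y' ⟶ (shiftFunctor C (-1:ℤ)).obj w,
      (Triangle.mk i' p' w').invRotate.mor₁ ≫ θ
        = r ≫ (Triangle.mk φ π pd).invRotate.mor₁ := ⟨ϱ₀, hϱ₀⟩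
  have key : (Triangle.mk κ p (gw ≫ pd)).invRotate.mor₁ =
      (shiftFunctor C (-1:ℤ)).map gw ≫ (Triangle.mk φ π pd).invRotate.mor₁ := by
    dsimp [Triangle.invRotate]
    erw [Functor.map_comp]
    exact (show -((shiftFunctor C (-1:ℤ)).map gw ≫ (shiftFunctor C (-1:ℤ)).map pd) ≫ (shiftEquiv C (1:ℤ)).unitIso.inv.app f = (shiftFunctor C (-1:ℤ)).map gw ≫ (-(shiftFunctor C (-1:ℤ)).map pd ≫ (shiftEquiv C (1:ℤ)).unitIso.inv.app f) by simp only [Preadditive.neg_comp, Preadditive.comp_neg]; exact congrArg Neg.neg (Category.assoc _ _ _))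
  obtain ⟨ϱ', hmapϱ⟩ : ∃ r : y' ⟶ w, (shiftFunctor C (-1:ℤ)).map r = ϱ :=
    ⟨(shiftFunctor C (-1:ℤ)).preimage ϱ, (shiftFunctor C (-1:ℤ)).map_preimage ϱ⟩
  obtain ⟨ς, hς⟩ := hgw hy'Y ϱ'
  have hρκ : ((Triangle.mk i' p' w').invRotate.mor₁ ≫ θ) ≫ κ = 0 := by
    have hfact : (Triangle.mk i' p' w').invRotate.mor₁ ≫ θ
        = (shiftFunctor C (-1:ℤ)).map ς ≫ (Triangle.mk κ p (gw ≫ pd)).invRotate.mor₁ := by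
      erw [key, ← assoc, ← Functor.map_comp, hς, hmapϱ, hϱ]; rfl
    erw [hfact, assoc]
    have hz : (Triangle.mk κ p (gw ≫ pd)).invRotate.mor₁ ≫ κ = 0 :=
      comp_distTriang_mor_zero₁₂ _ hTe''
    exact (congrArg ((shiftFunctor C (-1:ℤ)).map ς ≫ ·) hz).trans comp_zero
  obtain ⟨β₀, hβ₀⟩ := Triangle.yoneda_exact₂ _ hT'' (θ ≫ κ) (by
    show (Triangle.mk i' p' w').invRotate.mor₁ ≫ θ ≫ κ = 0
    erw [← assoc]
    exact hρκ)
  obtain ⟨β, hβ⟩ : ∃ b : e' ⟶ e, θ ≫ κ = i' ≫ b := ⟨β₀, hβ₀⟩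
  obtain ⟨γ₀, hγ₀⟩ := Triangle.yoneda_exact₂ _ hT' (α - β ≫ ε) (by
    show i' ≫ (α - β ≫ ε) = 0
    rw [Preadditive.comp_sub, ← assoc, ← hβ, assoc, hκε, hθ, sub_self])
  obtain ⟨γ, hγ⟩ : ∃ g : y' ⟶ d, α - β ≫ ε = p' ≫ g := ⟨γ₀, hγ₀⟩
  obtain ⟨β'', hβ''⟩ := hAY y' hy'Y γ
  refine ⟨β + p' ≫ β'', ?_⟩
  rw [Preadditive.add_comp, assoc, hβ'', ← hγ]
  abel

end SMPaper
end
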